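/- arXiv:0901.3090 — 6 statements merged into one kernel-verified Lean document; each statement's English description precedes it below -/
import Mathlib

section
/- Let k be a field, A a finite-dimensional unital k-algebra with d = dim_k A, and M a finitely generated A-module. Then there exists a projective resolution ⋯ → P_n → P_{n−1} → ⋯ → P_0 → M → 0 of M by finitely generated projective A-modules such that dim_k P_n ≤ d·(d−1)^n·dim_k M for every n ∈ ℕ. In particular, every finitely generated module over a finite-dimensional algebra admits a projective resolution whose terms have dimensions bounded by an exponential function of n. -/
open CategoryTheory Module

universe u v

noncomputable section Aux

variable (k : Type u) [Field k] (A : Type v) [Ring A] [Algebra k A] [FiniteDimensional k A]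

structure GoodMod : Type (max u v + 1) where
  X : Type v
  [iAdd : AddCommGroup X]
  [iModk : Module k X]
  [iModA : Module A X]
  [iTower : IsScalarTower k A X]
  [iFin : Module.Finite A X]

attribute [instance] GoodMod.iAdd GoodMod.iModk GoodMod.iModA GoodMod.iTower GoodMod.iFin

variable {k A}

instance (N : GoodMod k A) : FiniteDimensional k N.X := Module.Finite.trans A N.X

/-- k-dimension of the module. -/
def GoodMod.dk (N : GoodMod k A) : ℕ := finrank k N.X

/-- The canonical surjection from a free module, using a `k`-basis as generators. -/
def GoodMod.proj (N : GoodMod k A) : (Fin N.dk → A) →ₗ[A] N.X :=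
  Fintype.linearCombination A (α := Fin N.dk) (⇑(finBasis k N.X))

theorem GoodMod.proj_surjective (N : GoodMod k A) : Function.Surjective N.proj := by
  erw [← LinearMap.range_eq_top, GoodMod.proj, Fintype.range_linearCombination, eq_top_iff]
  intro x _
  have h1 : x ∈ Submodule.span k (Set.range ⇑(finBasis k N.X)) := by
    rw [Basis.span_eq]; trivial
  exact Submodule.span_le_restrictScalars k A _ h1

/-- The kernel of the canonical surjection, as a new `GoodMod`. -/
def GoodMod.step (N : GoodMod k A) : GoodMod k A where
  X := LinearMap.ker N.proj
  iFin := by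
    haveI : Module.Finite k ↥(LinearMap.ker N.proj) :=
      inferInstanceAs (Module.Finite k
        ↥(Submodule.restrictScalars k (LinearMap.ker N.proj)))
    exact Module.Finite.of_restrictScalars_finite k A _

theorem finrank_pi_fin (m : ℕ) : finrank k (Fin m → A) = m * finrank k A := by
  rw [finrank_pi_fintype k, Finset.sum_const, Finset.card_univ, Fintype.card_fin,
    smul_eq_mul]

theorem GoodMod.dk_step (N : GoodMod k A) :
    N.step.dk = N.dk * finrank k A - N.dk := by
  have h := LinearMap.finrank_range_add_finrank_ker ((N.proj).restrictScalars k)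
  have hr : LinearMap.range ((N.proj).restrictScalars k) = ⊤ := by
    rw [LinearMap.range_eq_top]
    exact N.proj_surjective
  rw [hr, finrank_top] at h
  have hdom := finrank_pi_fin (k := k) (A := A) N.dk
  have hker : N.step.dk = finrank k ↥(LinearMap.ker ((N.proj).restrictScalars k)) := by
    rw [LinearMap.ker_restrictScalars]
    rfl
  have hNX : finrank k N.X = N.dk := rfl
  rw [hNX, hdom] at h
  rw [hker]
  omega

/-- Iterated kernels. -/
def GoodMod.seq (M0 : GoodMod k A) : ℕ → GoodMod k A
  | 0 => M0
  | n + 1 => (M0.seq n).step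

/-- `RestrictScalars` doesn't change the `k`-module when there already is a tower. -/
def restrictScalarsEquiv (X : Type v) [AddCommGroup X] [Module k X] [Module A X]
    [IsScalarTower k A X] : RestrictScalars k A X ≃ₗ[k] X :=
  { toFun := fun x => (x : X)
    invFun := fun x => x
    left_inv := fun _ => rfl
    right_inv := fun _ => rfl
    map_add' := fun _ _ => rfl
    map_smul' := fun c x => algebraMap_smul A c (show X from x) }

theorem finrank_restrictScalars_eq (X : Type v) [AddCommGroup X] [Module k X] [Module A X]
    [IsScalarTower k A X] : finrank k (RestrictScalars k A X) = finrank k X :=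
  (restrictScalarsEquiv (k := k) (A := A) (X := X)).finrank_eq

end Aux

/-- Over a finite-dimensional algebra `A` (with `d = dim_k A`), every
finitely generated `A`-module `M` admits a projective resolution
`⋯ → P n → ⋯ → P 0 → M → 0` by finitely generated projective `A`-modules with
`dim_k (P n) ≤ d * (d-1)^n * dim_k M` for all `n`. -/
theorem exists_projective_resolution_dim_le
    (k : Type u) [Field k] (A : Type v) [Ring A] [Algebra k A] [FiniteDimensional k A]
    (M : Type v) [AddCommGroup M] [Module A M] [Module.Finite A M] :
    ∃ (P : ℕ → ModuleCat.{v} A) (δ : ∀ n, P (n + 1) ⟶ P n) (π : P 0 ⟶ ModuleCat.of A M),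
      (∀ n, Projective (P n)) ∧
      (∀ n, Module.Finite A (P n)) ∧
      Function.Surjective π ∧
      LinearMap.range (δ 0).hom = LinearMap.ker π.hom ∧
      (∀ n, LinearMap.range (δ (n + 1)).hom = LinearMap.ker (δ n).hom) ∧
      (∀ n, Module.finrank k (RestrictScalars k A (P n)) ≤
        Module.finrank k A * (Module.finrank k A - 1) ^ n *
          Module.finrank k (RestrictScalars k A M)) := by
  classical
  letI : Module A (RestrictScalars k A M) := RestrictScalars.moduleOrig k A M
  letI : Module.Finite A (RestrictScalars k A M) := ‹Module.Finite A M›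
  let M0 : GoodMod k A := { X := RestrictScalars k A M, iModk := RestrictScalars.module k A M, iModA := RestrictScalars.moduleOrig k A M, iTower := RestrictScalars.isScalarTower k A M, iFin := ‹Module.Finite A M› }
  set d : ℕ := Module.finrank k A with hd
  let St : ℕ → GoodMod k A := M0.seq
  -- dimension bound on the iterated kernels
  have hstep : ∀ n, (St (n + 1)).dk = (St n).dk * d - (St n).dk := fun n =>
    (St n).dk_step
  have hdkbound : ∀ n, (St n).dk ≤ (d - 1) ^ n * M0.dk := by
    intro n
    induction n with
    | zero => simp [St, GoodMod.seq]
    | succ n ih =>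
      have h2 : (St n).dk * d - (St n).dk ≤ (St n).dk * (d - 1) := by
        rcases Nat.eq_zero_or_pos d with h | h
        · simp [h]
        · have : (St n).dk * (d - 1) = (St n).dk * d - (St n).dk := by
            obtain ⟨e, he⟩ := Nat.exists_eq_add_of_le h
            rw [he, Nat.add_sub_cancel_left, Nat.mul_add, Nat.mul_one]
            omega
          omega
      calc (St (n + 1)).dk = (St n).dk * d - (St n).dk := hstep n
        _ ≤ (St n).dk * (d - 1) := h2
        _ ≤ ((d - 1) ^ n * M0.dk) * (d - 1) := Nat.mul_le_mul_right _ ih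
        _ = (d - 1) ^ (n + 1) * M0.dk := by ring
  refine ⟨fun n => ModuleCat.of A (Fin (St n).dk → A),
    fun n => ModuleCat.ofHom ((LinearMap.ker (St n).proj).subtype ∘ₗ (St (n + 1)).proj),
    ModuleCat.ofHom (show (Fin (St 0).dk → A) →ₗ[A] M from (St 0).proj), ?_, ?_, ?_, ?_, ?_, ?_⟩
  · intro n
    exact ModuleCat.projective_of_free (Pi.basisFun A (Fin (St n).dk))
  · intro n
    exact inferInstanceAs (Module.Finite A (Fin (St n).dk → A))
  · exact (St 0).proj_surjective
  · simp only [ModuleCat.hom_ofHom]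
    erw [LinearMap.range_comp, LinearMap.range_eq_top.mpr ((St 1).proj_surjective),
      Submodule.map_top, Submodule.range_subtype]
    rfl
  · intro n
    simp only [ModuleCat.hom_ofHom]
    erw [LinearMap.range_comp, LinearMap.range_eq_top.mpr ((St (n + 2)).proj_surjective),
      Submodule.map_top, Submodule.range_subtype, LinearMap.ker_comp,
      Submodule.ker_subtype, Submodule.comap_bot]
    rfl
  · intro n
    have h1 : Module.finrank k (RestrictScalars k A (Fin (St n).dk → A)) =
        (St n).dk * d := by
      rw [finrank_restrictScalars_eq, finrank_pi_fin]
    have h2 : Module.finrank k (RestrictScalars k A M) = M0.dk := rfl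
    show Module.finrank k (RestrictScalars k A (Fin (St n).dk → A)) ≤ _
    rw [h1, h2]
    calc (St n).dk * d ≤ ((d - 1) ^ n * M0.dk) * d :=
          Nat.mul_le_mul_right _ (hdkbound n)
      _ = d * (d - 1) ^ n * M0.dk := by ring
end

section
/- Let k be a field, p a prime, and m ≥ 1 an integer. For an integer j ≥ 1 write E_j = k[X]/(X^j), a k[X]-module. Let 0 ≤ h < m and let d be an integer with p^h < d < p^{h+1}. Let e_d : E_{p^h} × E_{p^{h+1}} → E_d be the k[X]-linear map induced by (Q,R) ↦ X^{d−p^h}·Q + R (well defined since d − p^h + p^h = d and p^{h+1} ≥ d). Then for every integer l with 0 ≤ l ≤ m, the map e_d sends {(Q,R) ∈ E_{p^h} × E_{p^{h+1}} : X^{p^l}·Q = 0 and X^{p^l}·R = 0} onto {S ∈ E_d : X^{p^l}·S = 0}. In particular (taking l = m) e_d is surjective. -/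
open Polynomial

/-- `Emod k j` is the `k[X]`-module `k[X]/(X^j)`. -/
abbrev Emod (k : Type*) [Field k] (j : ℕ) :=
  Polynomial k ⧸ Ideal.span {(X : Polynomial k) ^ j}

/-- The `k[X]`-linear map `k[X]/(X^a) → k[X]/(X^d)` induced by multiplication
by `X^t`, well defined when `d ≤ t + a`. -/
noncomputable def shiftMap (k : Type*) [Field k] (a d t : ℕ) (hle : d ≤ t + a) :
    Emod k a →ₗ[Polynomial k] Emod k d :=
  Submodule.mapQ (Ideal.span {(X : Polynomial k) ^ a}) (Ideal.span {(X : Polynomial k) ^ d})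
    (LinearMap.lsmul (Polynomial k) (Polynomial k) (X ^ t))
    (by
      refine Submodule.span_le.2 ?_
      simp only [Set.singleton_subset_iff, SetLike.mem_coe, Submodule.mem_comap,
        LinearMap.lsmul_apply, smul_eq_mul, Ideal.submodule_span_eq, Ideal.mem_span_singleton,
        ← pow_add]
      exact pow_dvd_pow _ hle)

/-- The `k[X]`-linear map `e_d : k[X]/(X^a) × k[X]/(X^b) → k[X]/(X^d)` induced by
`(Q, R) ↦ X^(d-a)·Q + R`, for `a ≤ d ≤ b`. -/
noncomputable def eD (k : Type*) [Field k] (a b d : ℕ) (h1 : a ≤ d) (h2 : d ≤ b) :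
    Emod k a × Emod k b →ₗ[Polynomial k] Emod k d :=
  (shiftMap k a d (d - a) (by omega)).coprod (shiftMap k b d 0 (by omega))

private lemma emod_mk_eq_zero {k : Type*} [Field k] {j : ℕ} (f : Polynomial k) :
    (Submodule.Quotient.mk f : Emod k j) = 0 ↔ (X : Polynomial k) ^ j ∣ f := by
  rw [Submodule.Quotient.mk_eq_zero]; exact Ideal.mem_span_singleton

private lemma shiftMap_mk {k : Type*} [Field k] (a d t : ℕ) (hle : d ≤ t + a)
    (f : Polynomial k) :
    shiftMap k a d t hle (Submodule.Quotient.mk f) = Submodule.Quotient.mk (X ^ t * f) := by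
  rw [shiftMap, Submodule.mapQ_apply]; rfl

private lemma eD_mk {k : Type*} [Field k] (a b d : ℕ) (h1 : a ≤ d) (h2 : d ≤ b)
    (q r : Polynomial k) :
    eD k a b d h1 h2 (Submodule.Quotient.mk q, Submodule.Quotient.mk r)
      = Submodule.Quotient.mk (X ^ (d - a) * q + r) := by
  rw [eD, LinearMap.coprod_apply, shiftMap_mk, shiftMap_mk, pow_zero, one_mul,
    ← Submodule.Quotient.mk_add]

/-- For `0 ≤ h < m` and `p^h < d < p^(h+1)`, the map
`e_d : E_{p^h} × E_{p^(h+1)} → E_d` maps, for every `l ≤ m`, the pairs killed by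
`X^(p^l)` onto the set of elements of `E_d` killed by `X^(p^l)`; in particular `e_d`
is surjective. -/
theorem eD_image_torsion (k : Type*) [Field k] (p m h d : ℕ) (hp : p.Prime)
    (hh : h < m) (hd1 : p ^ h < d) (hd2 : d < p ^ (h + 1)) :
    (∀ l ≤ m,
      (eD k (p ^ h) (p ^ (h + 1)) d hd1.le hd2.le) ''
          {qr : Emod k (p ^ h) × Emod k (p ^ (h + 1)) |
            (X : Polynomial k) ^ p ^ l • qr.1 = 0 ∧ (X : Polynomial k) ^ p ^ l • qr.2 = 0} =
        {s : Emod k d | (X : Polynomial k) ^ p ^ l • s = 0}) ∧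
    Function.Surjective (eD k (p ^ h) (p ^ (h + 1)) d hd1.le hd2.le) := by
  constructor
  · intro l _
    ext s
    obtain ⟨f, rfl⟩ := Submodule.Quotient.mk_surjective _ s
    simp only [Set.mem_image, Set.mem_setOf_eq]
    constructor
    · rintro ⟨⟨q, r⟩, ⟨hq, hr⟩, heq⟩
      have h0 : (X : Polynomial k) ^ p ^ l • ((q, r) : Emod k (p ^ h) × Emod k (p ^ (h + 1)))
          = 0 := Prod.ext hq hr
      rw [← heq, ← map_smul, h0, map_zero]
    · intro hs
      rw [← Submodule.Quotient.mk_smul, smul_eq_mul, emod_mk_eq_zero] at hs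
      by_cases hlh : l ≤ h
      · have hpl : p ^ l ≤ p ^ h := Nat.pow_le_pow_right hp.one_lt.le hlh
        obtain ⟨g, hg⟩ := hs
        have hf : f = X ^ (d - p ^ l) * g := by
          have hx : (X : Polynomial k) ^ p ^ l * f
              = X ^ p ^ l * (X ^ (d - p ^ l) * g) := by
            rw [hg, ← mul_assoc, ← pow_add]
            congr 2
            omega
          exact mul_left_cancel₀ (pow_ne_zero _ X_ne_zero) hx
        refine ⟨(Submodule.Quotient.mk (X ^ (p ^ h - p ^ l) * g), Submodule.Quotient.mk 0),
          ⟨?_, ?_⟩, ?_⟩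
        · rw [← Submodule.Quotient.mk_smul, smul_eq_mul, emod_mk_eq_zero]
          refine ⟨g, ?_⟩
          rw [← mul_assoc, ← pow_add]
          congr 2
          omega
        · rw [← Submodule.Quotient.mk_smul, smul_zero, Submodule.Quotient.mk_zero]
        · rw [eD_mk, add_zero, ← mul_assoc, ← pow_add, hf]
          congr 3
          omega
      · refine ⟨(Submodule.Quotient.mk 0, Submodule.Quotient.mk f), ⟨?_, ?_⟩, ?_⟩
        · rw [← Submodule.Quotient.mk_smul, smul_zero, Submodule.Quotient.mk_zero]
        · rw [← Submodule.Quotient.mk_smul, smul_eq_mul, emod_mk_eq_zero]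
          exact (pow_dvd_pow X (Nat.pow_le_pow_right hp.one_lt.le (by omega))).mul_right f
        · rw [eD_mk, mul_zero, zero_add]
  · intro s
    obtain ⟨f, rfl⟩ := Submodule.Quotient.mk_surjective _ s
    exact ⟨(Submodule.Quotient.mk 0, Submodule.Quotient.mk f), by rw [eD_mk, mul_zero, zero_add]⟩
end

section
/- Let p be a prime and G a finite p-group. Let R and S be subgroups of G and let T = Φ(R)·Φ(S)·⁅R,S⁆ be the subgroup of G generated by the Frattini subgroups Φ(R) and Φ(S) (viewed as subgroups of G) and the commutator subgroup ⁅R,S⁆. Assume T ≤ R ∩ S. Then: (1) R and S normalize each other, so R·S is a subgroup of G normalizing R and S; (2) T equals the Frattini subgroup Φ(R·S) of R·S; (3) the quotient (R·S)/T is elementary abelian, and the images of R and S in it are (elementary abelian) subgroups centralizing each other. -/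
open scoped Pointwise
open scoped commutatorElement

open Subgroup



/-- In a finite `p`-group, every coatom (maximal subgroup) contains all `p`-th powers
and all commutators. -/
lemma aux_coatom_cond {p : ℕ} [hp : Fact p.Prime] {P : Type*} [Group P] [Finite P]
    (h : IsPGroup p P) {K : Subgroup P} (hK : IsCoatom K) :
    (∀ x : P, x ^ p ∈ K) ∧ ∀ x y : P, ⁅x, y⁆ ∈ K := by
  haveI := h.isNilpotent
  haveI : K.Normal := NormalizerCondition.normal_of_coatom K normalizerCondition_of_isNilpotent hK
  set φ : P →* P ⧸ K := QuotientGroup.mk' K with hφ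
  have hφs : Function.Surjective φ := QuotientGroup.mk'_surjective K
  have hsub : ∀ W : Subgroup (P ⧸ K), W = ⊥ ∨ W = ⊤ := by
    intro W
    have h1 : K ≤ W.comap φ := by
      have : φ.ker ≤ W.comap φ := Subgroup.ker_le_comap φ W
      rwa [hφ, QuotientGroup.ker_mk'] at this
    have h2 : W = (W.comap φ).map φ := (Subgroup.map_comap_eq_self_of_surjective hφs W).symm
    rcases h1.lt_or_eq with h3 | h3
    · right
      rw [h2, hK.2 _ h3, Subgroup.map_top_of_surjective _ hφs]
    · left
      rw [h2, ← h3, Subgroup.map_eq_bot_iff, hφ, QuotientGroup.ker_mk']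
  have hQ : IsPGroup p (P ⧸ K) := h.to_quotient K
  have hgen : ∀ q : P ⧸ K, q ≠ 1 → Subgroup.zpowers q = ⊤ := by
    intro q hq
    refine (hsub _).resolve_left fun hbot => hq ?_
    have := Subgroup.mem_zpowers q
    rw [hbot, Subgroup.mem_bot] at this
    exact this
  have hpow : ∀ q : P ⧸ K, q ^ p = 1 := by
    intro q
    by_cases hq : q = 1
    · simp [hq]
    by_cases hqp : q ^ p = 1
    · exact hqp
    exfalso
    have h1 : q ∈ Subgroup.zpowers (q ^ p) := by rw [hgen _ hqp]; trivial
    obtain ⟨n, hn⟩ := Subgroup.mem_zpowers_iff.mp h1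
    have horder : (orderOf q : ℤ) ∣ ((p : ℤ) * n - 1) := by
      rw [orderOf_dvd_iff_zpow_eq_one, zpow_sub, zpow_one, zpow_mul, zpow_natCast, hn,
        mul_inv_cancel]
    have hpord : (p : ℤ) ∣ (orderOf q : ℤ) := by
      obtain ⟨k, hk⟩ := IsPGroup.iff_orderOf.mp hQ q
      rcases Nat.eq_zero_or_pos k with rfl | hk0
      · exfalso; exact hq (orderOf_eq_one_iff.mp (by simpa using hk))
      · exact_mod_cast hk ▸ dvd_pow_self p hk0.ne'
    have hdvd1 : (p : ℤ) ∣ 1 := by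
      have := dvd_sub (Dvd.intro n rfl) (hpord.trans horder)
      simpa using this
    have := Int.le_of_dvd one_pos hdvd1
    have h2 := hp.out.two_le
    omega
  have hcommQ : ∀ a b : P ⧸ K, Commute a b := by
    intro a b
    by_cases ha : a = 1
    · simp [ha]
    have : b ∈ Subgroup.zpowers a := by rw [hgen a ha]; trivial
    obtain ⟨n, hn⟩ := Subgroup.mem_zpowers_iff.mp this
    rw [← hn]
    exact Commute.zpow_right (Commute.refl a) n
  constructor
  · intro x
    have : (↑(x ^ p) : P ⧸ K) = 1 := by
      rw [QuotientGroup.mk_pow]; exact hpow _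
    exact (QuotientGroup.eq_one_iff _).mp this
  · intro x y
    have : (↑(⁅x, y⁆) : P ⧸ K) = 1 := by
      have h1 : ⁅(↑x : P ⧸ K), (↑y : P ⧸ K)⁆ = 1 :=
        commutatorElement_eq_one_iff_commute.mpr (hcommQ _ _)
      simpa [commutatorElement_def] using h1
    exact (QuotientGroup.eq_one_iff _).mp this



/-- In a finite group of exponent dividing a prime `p` in which all elements commute,
the Frattini subgroup is trivial. -/
lemma aux_frattini_eq_bot {p : ℕ} [hp : Fact p.Prime] {Q : Type*} [Group Q] [Finite Q]
    (hc : ∀ a b : Q, a * b = b * a) (hpow : ∀ a : Q, a ^ p = 1) :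
    frattini Q = ⊥ := by
  rw [eq_bot_iff]
  intro z hz
  rw [Subgroup.mem_bot]
  by_contra hz1
  -- the set of subgroups avoiding `z` has a maximal element `K`
  have hSfin : ({K : Subgroup Q | z ∉ K}).Finite := Set.toFinite _
  have hSne : ({K : Subgroup Q | z ∉ K}).Nonempty := ⟨⊥, by simpa using hz1⟩
  obtain ⟨K, hKS, hKmax'⟩ := hSfin.exists_maximal hSne
  have hKmax : ∀ L ∈ {K : Subgroup Q | z ∉ K}, K ≤ L → K = L :=
    fun L hL hle => le_antisymm hle (hKmax' hL hle)
  -- `K` is a coatom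
  have hKco : IsCoatom K := by
    constructor
    · intro htop; rw [htop] at hKS; exact hKS (Subgroup.mem_top z)
    · intro L hL
      by_contra hLtop
      obtain ⟨y, hy⟩ : ∃ y : Q, y ∉ L := by
        by_contra hy; push_neg at hy
        exact hLtop ((Subgroup.eq_top_iff' L).mpr hy)
      have hzL : z ∈ L := by
        by_contra hzL
        exact hL.ne (hKmax L hzL hL.le)
      have hyK : y ∉ K := fun h => hy (hL.le h)
      -- the subgroup generated by `K` and `y`
      set L' : Subgroup Q :=
        { carrier := {g | ∃ k ∈ K, ∃ m : ℤ, k * y ^ m = g}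
          one_mem' := ⟨1, K.one_mem, 0, by simp⟩
          mul_mem' := by
            rintro a b ⟨k1, hk1, m1, rfl⟩ ⟨k2, hk2, m2, rfl⟩
            refine ⟨k1 * k2, mul_mem hk1 hk2, m1 + m2, ?_⟩
            rw [zpow_add]
            calc k1 * k2 * (y ^ m1 * y ^ m2) = k1 * (k2 * y ^ m1) * y ^ m2 := by
                  rw [mul_assoc, mul_assoc, mul_assoc]
              _ = k1 * (y ^ m1 * k2) * y ^ m2 := by rw [hc k2 (y ^ m1)]
              _ = k1 * y ^ m1 * (k2 * y ^ m2) := by rw [mul_assoc, mul_assoc, mul_assoc]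
          inv_mem' := by
            rintro a ⟨k, hk, m, rfl⟩
            refine ⟨k⁻¹, inv_mem hk, -m, ?_⟩
            rw [mul_inv_rev, zpow_neg, hc (y ^ m)⁻¹ k⁻¹] } with hL'def
      have hKL' : K ≤ L' := fun k hk => ⟨k, hk, 0, by simp⟩
      have hyL' : y ∈ L' := ⟨1, K.one_mem, 1, by simp⟩
      have hKlt : z ∈ L' := by
        by_contra hzL'
        have := hKmax L' hzL' hKL'
        rw [this] at hyK
        exact hyK hyL'
      obtain ⟨k, hk, m, hkm⟩ := hKlt
      -- `p` does not divide `m`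
      have hpm : ¬ ((p : ℤ) ∣ m) := by
        rintro ⟨t, rfl⟩
        rw [zpow_mul, zpow_natCast, hpow y, one_zpow, mul_one] at hkm
        exact hKS (hkm ▸ hk)
      -- hence `y ∈ L`, contradiction
      have hym : y ^ m ∈ L := by
        have : y ^ m = k⁻¹ * z := by rw [← hkm]; group
        rw [this]
        exact mul_mem (inv_mem (hL.le hk)) hzL
      have hpm' : ¬ (p ∣ m.natAbs) := by
        rwa [Int.natCast_dvd] at hpm
      have hcop : IsCoprime m (p : ℤ) := by
        rw [Int.isCoprime_iff_gcd_eq_one, Int.gcd]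
        exact Nat.Coprime.symm (hp.out.coprime_iff_not_dvd.mpr hpm')
      obtain ⟨a, b, hab⟩ := hcop
      have : y = (y ^ m) ^ a * (y ^ (p : ℤ)) ^ b := by
        rw [← zpow_mul, ← zpow_mul, ← zpow_add, mul_comm m a, mul_comm (p : ℤ) b, hab, zpow_one]
      have hyL : y ∈ L := by
        rw [this]
        have h1 : y ^ (p : ℤ) = 1 := by rw [zpow_natCast]; exact hpow y
        rw [h1, one_zpow, mul_one]
        exact zpow_mem hym a
      exact hy hyL
  exact hKS (frattini_le_coatom hKco hz)


lemma aux_pow_mem_frattini {p : ℕ} [Fact p.Prime] {P : Type*} [Group P] [Finite P]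
    (h : IsPGroup p P) (x : P) : x ^ p ∈ frattini P := by
  have : frattini P = ⨅ K ∈ {H : Subgroup P | IsCoatom H}, K := rfl
  rw [this]
  simp only [Subgroup.mem_iInf]
  intro K hK
  exact (aux_coatom_cond h hK).1 x

lemma aux_commutator_mem_frattini {p : ℕ} [Fact p.Prime] {P : Type*} [Group P] [Finite P]
    (h : IsPGroup p P) (x y : P) : ⁅x, y⁆ ∈ frattini P := by
  have : frattini P = ⨅ K ∈ {H : Subgroup P | IsCoatom H}, K := rfl
  rw [this]
  simp only [Subgroup.mem_iInf]
  intro K hK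
  exact (aux_coatom_cond h hK).2 x y

/-- If `N` is normal in a finite group `P` with `P/N` elementary abelian
(exponent `p` and abelian), then `frattini P ≤ N`. -/
lemma aux_frattini_le {p : ℕ} [Fact p.Prime] {P : Type*} [Group P] [Finite P]
    (N : Subgroup P) [N.Normal] (hpow : ∀ x : P, x ^ p ∈ N)
    (hcomm : ∀ x y : P, ⁅x, y⁆ ∈ N) : frattini P ≤ N := by
  have hs : Function.Surjective (QuotientGroup.mk' N) := QuotientGroup.mk'_surjective N
  have key := frattini_le_comap_frattini_of_surjective hs
  have hQc : ∀ a b : P ⧸ N, a * b = b * a := by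
    intro a b
    obtain ⟨x, rfl⟩ := hs a
    obtain ⟨y, rfl⟩ := hs b
    rw [← map_mul, ← map_mul, QuotientGroup.mk'_eq_mk']
    exact ⟨⁅y⁻¹, x⁻¹⁆, hcomm _ _, by group⟩
  have hQp : ∀ a : P ⧸ N, a ^ p = 1 := by
    intro a
    obtain ⟨x, rfl⟩ := hs a
    rw [← map_pow]
    exact (QuotientGroup.eq_one_iff _).mpr (hpow x)
  rw [aux_frattini_eq_bot hQc hQp, MonoidHom.comap_bot, QuotientGroup.ker_mk'] at key
  exact key


/-- In a finite `p`-group, the (embedded) Frattini subgroup is monotone in the subgroup. -/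
lemma aux_frattini_map_mono {p : ℕ} [Fact p.Prime] {G : Type*} [Group G] [Finite G]
    (hG : IsPGroup p G) {A B : Subgroup G} (hAB : A ≤ B) :
    (frattini A).map A.subtype ≤ (frattini B).map B.subtype := by
  set X : Subgroup G := (frattini B).map B.subtype with hX
  haveI hnormX : (X.subgroupOf A).Normal := by
    constructor
    rintro n hn g
    rw [Subgroup.mem_subgroupOf] at hn ⊢
    obtain ⟨f, hf, hfe⟩ := hn
    refine ⟨(⟨↑g, hAB g.2⟩ : B) * f * (⟨↑g, hAB g.2⟩ : B)⁻¹,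
      Subgroup.Normal.conj_mem inferInstance f hf _, ?_⟩
    have h2 : (f : G) = ↑n := hfe
    simp [h2]
  have h1 : frattini A ≤ X.subgroupOf A := by
    apply aux_frattini_le (p := p)
    · intro x
      rw [Subgroup.mem_subgroupOf]
      refine ⟨(⟨↑x, hAB x.2⟩ : B) ^ p, aux_pow_mem_frattini (hG.to_subgroup B) _, ?_⟩
      simp
    · intro x y
      rw [Subgroup.mem_subgroupOf]
      refine ⟨⁅(⟨↑x, hAB x.2⟩ : B), (⟨↑y, hAB y.2⟩ : B)⁆,
        aux_commutator_mem_frattini (hG.to_subgroup B) _ _, ?_⟩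
      simp [commutatorElement_def]
  calc (frattini A).map A.subtype ≤ (X.subgroupOf A).map A.subtype := Subgroup.map_mono h1
    _ = X ⊓ A := Subgroup.subgroupOf_map_subtype X A
    _ ≤ X := inf_le_left


lemma aux_mem_normalizer {G : Type*} [Group G] {H : Subgroup G} {g : G}
    (h1 : ∀ t ∈ H, g * t * g⁻¹ ∈ H) (h2 : ∀ t ∈ H, g⁻¹ * t * g ∈ H) :
    g ∈ Subgroup.normalizer (H : Set G) := by
  rw [Subgroup.mem_normalizer_iff]
  intro h
  constructor
  · exact fun hh => h1 h hh
  · intro hh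
    have h3 := h2 _ hh
    have e : g⁻¹ * (g * h * g⁻¹) * g = h := by group
    rwa [e] at h3


/-- Let `G` be a finite `p`-group, `R`, `S` subgroups, and
`T = Φ(R)·Φ(S)·⁅R,S⁆` the subgroup generated by the Frattini subgroups of `R` and `S`
and the commutator `⁅R,S⁆`.  If `T ≤ R ∩ S` then: (1) `R` and `S` normalize each
other, so `R·S` is a subgroup normalizing both; (2) `T` is the Frattini subgroup of
`R·S`; (3) the quotient `(R·S)/T` is elementary abelian and the images of `R` and `S`
in it centralize each other. -/
theorem frattini_mul_of_commutator_le
    {p : ℕ} [Fact p.Prime] {G : Type*} [Group G] [Finite G] (hG : IsPGroup p G)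
    (R S T : Subgroup G)
    (hT : T = (frattini R).map R.subtype ⊔ (frattini S).map S.subtype ⊔ ⁅R, S⁆)
    (hTRS : T ≤ R ⊓ S) :
    -- (1) `R` and `S` normalize each other, `R·S = R ⊔ S` as sets, and `R·S`
    -- normalizes both `R` and `S`
    (R ≤ Subgroup.normalizer (S : Set G) ∧ S ≤ Subgroup.normalizer (R : Set G) ∧
      (R : Set G) * (S : Set G) = ((R ⊔ S : Subgroup G) : Set G) ∧
      R ⊔ S ≤ Subgroup.normalizer (R : Set G) ∧ R ⊔ S ≤ Subgroup.normalizer (S : Set G)) ∧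
    -- (2) `T` is the Frattini subgroup of `R·S`
    T = (frattini ↥(R ⊔ S)).map (R ⊔ S).subtype ∧
    -- (3) `(R·S)/T` is elementary abelian, and the images of `R` and `S` in it
    -- centralize each other
    ((T.subgroupOf (R ⊔ S)).Normal ∧
      (∀ x ∈ R ⊔ S, x ^ p ∈ T) ∧
      (∀ x ∈ R ⊔ S, ∀ y ∈ R ⊔ S, ⁅x, y⁆ ∈ T) ∧
      (∀ r ∈ R, ∀ s ∈ S, ⁅r, s⁆ ∈ T)) := by
  have hTR : T ≤ R := hTRS.trans inf_le_left
  have hTS : T ≤ S := hTRS.trans inf_le_right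
  have hCT : ⁅R, S⁆ ≤ T := by rw [hT]; exact le_sup_right
  have hΦR : (frattini R).map R.subtype ≤ T := by rw [hT]; exact le_sup_left.trans le_sup_left
  have hΦS : (frattini S).map S.subtype ≤ T := by rw [hT]; exact le_sup_right.trans le_sup_left
  have hmemRS : ∀ {a b : G}, a ∈ R → b ∈ S → ⁅a, b⁆ ∈ T :=
    fun ha hb => hCT (Subgroup.commutator_mem_commutator ha hb)
  have hmemSR : ∀ {a b : G}, a ∈ S → b ∈ R → ⁅a, b⁆ ∈ T := by
    intro a b ha hb
    apply hCT
    rw [Subgroup.commutator_comm]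
    exact Subgroup.commutator_mem_commutator ha hb
  -- conjugation facts
  have hconjRS : ∀ {r s : G}, r ∈ R → s ∈ S → r * s * r⁻¹ ∈ S := by
    intro r s hr hs
    have h1 : ⁅r, s⁆ * s ∈ S := mul_mem (hTS (hmemRS hr hs)) hs
    have e : r * s * r⁻¹ = ⁅r, s⁆ * s := by group
    rwa [e]
  have hconjSR : ∀ {s r : G}, s ∈ S → r ∈ R → s * r * s⁻¹ ∈ R := by
    intro s r hs hr
    have h1 : ⁅s, r⁆ * r ∈ R := mul_mem (hTR (hmemSR hs hr)) hr
    have e : s * r * s⁻¹ = ⁅s, r⁆ * r := by group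
    rwa [e]
  have hconjT : ∀ {g t : G}, (g ∈ R ∨ g ∈ S) → t ∈ T → g * t * g⁻¹ ∈ T := by
    rintro g t (hg | hg) ht
    · have h1 : ⁅g, t⁆ * t ∈ T := mul_mem (hmemRS hg (hTS ht)) ht
      have e : g * t * g⁻¹ = ⁅g, t⁆ * t := by group
      rwa [e]
    · have h1 : ⁅g, t⁆ * t ∈ T := mul_mem (hmemSR hg (hTR ht)) ht
      have e : g * t * g⁻¹ = ⁅g, t⁆ * t := by group
      rwa [e]
  -- (1) normalizers
  have hRnormS : R ≤ Subgroup.normalizer (S : Set G) := by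
    intro r hr
    refine aux_mem_normalizer (fun t ht => hconjRS hr ht) (fun t ht => ?_)
    have h1 := hconjRS (inv_mem hr) ht
    rwa [inv_inv] at h1
  have hSnormR : S ≤ Subgroup.normalizer (R : Set G) := by
    intro s hs
    refine aux_mem_normalizer (fun t ht => hconjSR hs ht) (fun t ht => ?_)
    have h1 := hconjSR (inv_mem hs) ht
    rwa [inv_inv] at h1
  have hRnormT : R ≤ Subgroup.normalizer (T : Set G) := by
    intro r hr
    refine aux_mem_normalizer (fun t ht => hconjT (Or.inl hr) ht) (fun t ht => ?_)
    have h1 := hconjT (Or.inl (inv_mem hr)) ht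
    rwa [inv_inv] at h1
  have hSnormT : S ≤ Subgroup.normalizer (T : Set G) := by
    intro s hs
    refine aux_mem_normalizer (fun t ht => hconjT (Or.inr hs) ht) (fun t ht => ?_)
    have h1 := hconjT (Or.inr (inv_mem hs)) ht
    rwa [inv_inv] at h1
  have hMnormT : R ⊔ S ≤ Subgroup.normalizer (T : Set G) := sup_le hRnormT hSnormT
  -- decomposition of elements of `R ⊔ S`
  have hset : ∀ x ∈ R ⊔ S, ∃ r ∈ R, ∃ s ∈ S, r * s = x := by
    intro x hx
    have hx' : x ∈ Subgroup.closure ((R : Set G) ∪ (S : Set G)) := by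
      rwa [Subgroup.closure_union, Subgroup.closure_eq, Subgroup.closure_eq]
    refine Subgroup.closure_induction ?_ ?_ ?_ ?_ hx'
    · rintro y (hy | hy)
      · exact ⟨y, hy, 1, one_mem S, mul_one y⟩
      · exact ⟨1, one_mem R, y, hy, one_mul y⟩
    · exact ⟨1, one_mem R, 1, one_mem S, mul_one 1⟩
    · rintro x y hx hy ⟨r1, hr1, s1, hs1, hx1⟩ ⟨r2, hr2, s2, hs2, hy1⟩
      refine ⟨r1 * (s1 * r2 * s1⁻¹), mul_mem hr1 (hconjSR hs1 hr2), s1 * s2,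
        mul_mem hs1 hs2, ?_⟩
      rw [← hx1, ← hy1]; group
    · rintro x hx ⟨r, hr, s, hs, hx1⟩
      have h9 := hconjSR (inv_mem hs) (inv_mem hr)
      rw [inv_inv] at h9
      refine ⟨s⁻¹ * r⁻¹ * s, h9, s⁻¹, inv_mem hs, ?_⟩
      rw [← hx1]; group
  have hsetEq : (R : Set G) * (S : Set G) = ((R ⊔ S : Subgroup G) : Set G) := by
    ext x
    constructor
    · rintro ⟨r, hr, s, hs, rfl⟩
      exact mul_mem ((le_sup_left : R ≤ R ⊔ S) hr) ((le_sup_right : S ≤ R ⊔ S) hs)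
    · intro hx
      obtain ⟨r, hr, s, hs, rfl⟩ := hset x hx
      exact Set.mul_mem_mul hr hs
  have hTM : T ≤ R ⊔ S := hTR.trans le_sup_left
  haveI hT'norm : (T.subgroupOf (R ⊔ S)).Normal := by
    constructor
    intro n hn g
    rw [Subgroup.mem_subgroupOf] at hn ⊢
    have hg := hMnormT g.2
    rw [Subgroup.mem_normalizer_iff] at hg
    have h1 := (hg ↑n).mp hn
    simpa using h1
  -- quotient considerations
  set φ : ↥(R ⊔ S) →* (↥(R ⊔ S) ⧸ T.subgroupOf (R ⊔ S)) :=
    QuotientGroup.mk' (T.subgroupOf (R ⊔ S)) with hφdef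
  have hφ1 : ∀ x : ↥(R ⊔ S), φ x = 1 ↔ (x : G) ∈ T := by
    intro x
    rw [hφdef]
    exact (QuotientGroup.eq_one_iff x).trans Subgroup.mem_subgroupOf
  have hpowR : ∀ {r : G}, r ∈ R → r ^ p ∈ T := by
    intro r hr
    apply hΦR
    exact ⟨(⟨r, hr⟩ : R) ^ p, aux_pow_mem_frattini (hG.to_subgroup R) _, by simp⟩
  have hpowS : ∀ {s : G}, s ∈ S → s ^ p ∈ T := by
    intro s hs
    apply hΦS
    exact ⟨(⟨s, hs⟩ : S) ^ p, aux_pow_mem_frattini (hG.to_subgroup S) _, by simp⟩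
  have hcomm4 : ∀ {a b : G}, (a ∈ R ∨ a ∈ S) → (b ∈ R ∨ b ∈ S) → ⁅a, b⁆ ∈ T := by
    rintro a b (ha | ha) (hb | hb)
    · apply hΦR
      exact ⟨⁅(⟨a, ha⟩ : R), (⟨b, hb⟩ : R)⁆,
        aux_commutator_mem_frattini (hG.to_subgroup R) _ _, by simp [commutatorElement_def]⟩
    · exact hmemRS ha hb
    · exact hmemSR ha hb
    · apply hΦS
      exact ⟨⁅(⟨a, ha⟩ : S), (⟨b, hb⟩ : S)⁆,
        aux_commutator_mem_frattini (hG.to_subgroup S) _ _, by simp [commutatorElement_def]⟩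
  have hCommAtom : ∀ (a b : ↥(R ⊔ S)), ((a : G) ∈ R ∨ (a : G) ∈ S) →
      ((b : G) ∈ R ∨ (b : G) ∈ S) → Commute (φ a) (φ b) := by
    intro a b ha hb
    have hc : ⁅((b : G))⁻¹, ((a : G))⁻¹⁆ ∈ T := by
      apply hcomm4
      · rcases hb with hb | hb
        · exact Or.inl (inv_mem hb)
        · exact Or.inr (inv_mem hb)
      · rcases ha with ha | ha
        · exact Or.inl (inv_mem ha)
        · exact Or.inr (inv_mem ha)
    show φ a * φ b = φ b * φ a
    rw [hφdef, ← map_mul, ← map_mul, QuotientGroup.mk'_eq_mk']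
    refine ⟨⟨⁅((b : G))⁻¹, ((a : G))⁻¹⁆, hTM hc⟩, Subgroup.mem_subgroupOf.mpr hc, ?_⟩
    apply Subtype.ext
    show ((a : G) * b) * ⁅((b : G))⁻¹, ((a : G))⁻¹⁆ = (b : G) * a
    group
  have hdecomp : ∀ x : ↥(R ⊔ S), ∃ (a b : ↥(R ⊔ S)), ((a : G) ∈ R) ∧ ((b : G) ∈ S) ∧
      x = a * b := by
    intro x
    obtain ⟨r, hr, s, hs, hx⟩ := hset ↑x x.2
    exact ⟨⟨r, (le_sup_left : R ≤ R ⊔ S) hr⟩, ⟨s, (le_sup_right : S ≤ R ⊔ S) hs⟩, hr, hs,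
      Subtype.ext hx.symm⟩
  have hQcomm : ∀ u v : ↥(R ⊔ S), Commute (φ u) (φ v) := by
    intro u v
    obtain ⟨a1, b1, ha1, hb1, rfl⟩ := hdecomp u
    obtain ⟨a2, b2, ha2, hb2, rfl⟩ := hdecomp v
    rw [map_mul, map_mul]
    exact Commute.mul_left
      ((hCommAtom a1 a2 (Or.inl ha1) (Or.inl ha2)).mul_right
        (hCommAtom a1 b2 (Or.inl ha1) (Or.inr hb2)))
      ((hCommAtom b1 a2 (Or.inr hb1) (Or.inl ha2)).mul_right
        (hCommAtom b1 b2 (Or.inr hb1) (Or.inr hb2)))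
  have hpowM : ∀ x ∈ R ⊔ S, x ^ p ∈ T := by
    intro x hx
    obtain ⟨a, b, ha, hb, hab⟩ := hdecomp ⟨x, hx⟩
    have h1 : φ (⟨x, hx⟩ : ↥(R ⊔ S)) ^ p = 1 := by
      rw [hab, map_mul, (hCommAtom a b (Or.inl ha) (Or.inr hb)).mul_pow]
      have ha' : φ a ^ p = 1 := by
        rw [← map_pow]
        exact (hφ1 _).mpr (by simpa using hpowR ha)
      have hb' : φ b ^ p = 1 := by
        rw [← map_pow]
        exact (hφ1 _).mpr (by simpa using hpowS hb)
      rw [ha', hb', one_mul]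
    rw [← map_pow] at h1
    have h2 := (hφ1 _).mp h1
    simpa using h2
  have hcommM : ∀ x ∈ R ⊔ S, ∀ y ∈ R ⊔ S, ⁅x, y⁆ ∈ T := by
    intro x hx y hy
    have h1 : φ ⁅(⟨x, hx⟩ : ↥(R ⊔ S)), (⟨y, hy⟩ : ↥(R ⊔ S))⁆ = 1 := by
      rw [map_commutatorElement]
      exact commutatorElement_eq_one_iff_commute.mpr (hQcomm _ _)
    have h2 := (hφ1 _).mp h1
    simpa [commutatorElement_def] using h2
  -- (2)
  have hfratM_le : (frattini ↥(R ⊔ S)).map (R ⊔ S).subtype ≤ T := by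
    have h1 : frattini ↥(R ⊔ S) ≤ T.subgroupOf (R ⊔ S) := by
      apply aux_frattini_le (p := p)
      · intro x
        rw [Subgroup.mem_subgroupOf]
        simpa using hpowM ↑x x.2
      · intro x y
        rw [Subgroup.mem_subgroupOf]
        simpa [commutatorElement_def] using hcommM ↑x x.2 ↑y y.2
    calc (frattini ↥(R ⊔ S)).map (R ⊔ S).subtype
        ≤ (T.subgroupOf (R ⊔ S)).map (R ⊔ S).subtype := Subgroup.map_mono h1
      _ = T ⊓ (R ⊔ S) := Subgroup.subgroupOf_map_subtype T (R ⊔ S)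
      _ = T := inf_eq_left.mpr hTM
  have hT_le : T ≤ (frattini ↥(R ⊔ S)).map (R ⊔ S).subtype := by
    rw [hT]
    refine sup_le (sup_le ?_ ?_) ?_
    · exact aux_frattini_map_mono hG le_sup_left
    · exact aux_frattini_map_mono hG le_sup_right
    · rw [Subgroup.commutator_le]
      intro a ha b hb
      exact ⟨⁅(⟨a, (le_sup_left : R ≤ R ⊔ S) ha⟩ : ↥(R ⊔ S)),
        (⟨b, (le_sup_right : S ≤ R ⊔ S) hb⟩ : ↥(R ⊔ S))⁆,
        aux_commutator_mem_frattini (hG.to_subgroup _) _ _, by simp [commutatorElement_def]⟩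
  exact ⟨⟨hRnormS, hSnormR, hsetEq, sup_le Subgroup.le_normalizer hSnormR,
    sup_le hRnormS Subgroup.le_normalizer⟩,
    le_antisymm hT_le hfratM_le,
    hT'norm, hpowM, hcommM, fun r hr s hs => hmemRS hr hs⟩
end

section
/- Let k be a field of characteristic 2 and let G be an F₂-vector space of finite dimension m with an ordered basis b₁, …, b_m; write B = {b₁,…,b_m}. For x ∈ G∖{0} let d(x) be the least index i such that x lies in the span of b₁,…,b_i. Let Ẽ be the quotient of the free associative unital k-algebra on generators γ_x, one for each x ∈ G∖{0}, by the two-sided ideal generated by the elements Σ_{x ∈ G∖H} γ_x for every hyperplane H of G (i.e. every F₂-subspace of codimension 1), together with the commutators [γ_x + γ_y, γ_{x+y}] = (γ_x+γ_y)γ_{x+y} + γ_{x+y}(γ_x+γ_y) for all distinct x, y ∈ G∖{0}. Then Ẽ is spanned as a k-vector space by the 'special ordered monomials': the products γ_{x₁}γ_{x₂}⋯γ_{x_n} (n ≥ 0, the empty product being 1) with every x_i ∈ G∖(B∪{0}) and d(x₁) ≤ d(x₂) ≤ ⋯ ≤ d(x_n). -/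
open scoped Classical

/-- `dB b x` is the least `i` such that `x` lies in the span of the first `i`
vectors `b 0, …, b (i-1)` of the basis `b`. -/
noncomputable def dB {G : Type*} [AddCommGroup G] [Module (ZMod 2) G] {m : ℕ}
    (b : Module.Basis (Fin m) (ZMod 2) G) (x : G) : ℕ :=
  sInf {i : ℕ | x ∈ Submodule.span (ZMod 2) {y : G | ∃ j : Fin m, (j : ℕ) < i ∧ y = b j}}

/-- The defining relations of the algebra `Ẽ`: for every hyperplane `H` of `G` the
relation `∑_{x ∉ H} γ_x = 0`, and for all distinct nonzero `x`, `y` the relation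
`[γ_x + γ_y, γ_{x+y}] = 0` (where `[a,b] = ab + ba`). -/
inductive ExtRel (k : Type*) [Field k] (G : Type*) [AddCommGroup G] [Module (ZMod 2) G]
    [Fintype G] :
    FreeAlgebra k {x : G // x ≠ 0} → FreeAlgebra k {x : G // x ≠ 0} → Prop
  | hyperplane (H : Submodule (ZMod 2) G)
      (hH : Module.finrank (ZMod 2) H + 1 = Module.finrank (ZMod 2) G) :
      ExtRel k G
        (∑ x ∈ Finset.univ.filter (fun x : {x : G // x ≠ 0} => (x : G) ∉ H),
          FreeAlgebra.ι k x) 0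
  | comm (x y : {x : G // x ≠ 0}) (hxy : x ≠ y) (hs : (x : G) + (y : G) ≠ 0) :
      ExtRel k G
        ((FreeAlgebra.ι k x + FreeAlgebra.ι k y) * FreeAlgebra.ι k ⟨(x : G) + y, hs⟩ +
          FreeAlgebra.ι k ⟨(x : G) + y, hs⟩ * (FreeAlgebra.ι k x + FreeAlgebra.ι k y)) 0

namespace SOMaux

variable {G : Type*} [AddCommGroup G] [Module (ZMod 2) G] {m : ℕ}
  (b : Module.Basis (Fin m) (ZMod 2) G)

/-- span of the first `i` basis vectors -/
noncomputable def SP (i : ℕ) : Submodule (ZMod 2) G :=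
  Submodule.span (ZMod 2) {y : G | ∃ j : Fin m, (j : ℕ) < i ∧ y = b j}

lemma dB_def (x : G) : dB b x = sInf {i : ℕ | x ∈ SP b i} := rfl

lemma SP_mono {i i' : ℕ} (h : i ≤ i') : SP b i ≤ SP b i' :=
  Submodule.span_mono (fun y ⟨j, hj, hy⟩ => ⟨j, lt_of_lt_of_le hj h, hy⟩)

lemma SP_top : SP b m = ⊤ := by
  have : {y : G | ∃ j : Fin m, (j : ℕ) < m ∧ y = b j} = Set.range b := by
    ext y; constructor
    · rintro ⟨j, _, rfl⟩; exact ⟨j, rfl⟩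
    · rintro ⟨j, rfl⟩; exact ⟨j, j.isLt, rfl⟩
  rw [SP, this, b.span_eq]

lemma dB_nonempty (x : G) : {i : ℕ | x ∈ SP b i}.Nonempty :=
  ⟨m, show x ∈ SP b m by rw [SP_top]; trivial⟩

lemma mem_SP_dB (x : G) : x ∈ SP b (dB b x) := Nat.sInf_mem (dB_nonempty b x)

lemma not_mem_SP_of_lt {x : G} {i : ℕ} (h : i < dB b x) : x ∉ SP b i :=
  Nat.notMem_of_lt_sInf h

lemma dB_le_of_mem {x : G} {i : ℕ} (h : x ∈ SP b i) : dB b x ≤ i := Nat.sInf_le h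

lemma mem_SP_of_le {x : G} {i : ℕ} (h : dB b x ≤ i) : x ∈ SP b i :=
  SP_mono b h (mem_SP_dB b x)

lemma dB_le_m (x : G) : dB b x ≤ m :=
  dB_le_of_mem b (show x ∈ SP b m by rw [SP_top]; trivial)

lemma dB_pos {x : G} (hx : x ≠ 0) : 0 < dB b x := by
  rcases Nat.eq_zero_or_pos (dB b x) with h | h
  · exfalso
    have hm : x ∈ SP b 0 := h ▸ mem_SP_dB b x
    have : {y : G | ∃ j : Fin m, (j : ℕ) < 0 ∧ y = b j} = (∅ : Set G) := by
      ext y; simp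
    rw [SP, this, Submodule.span_empty] at hm
    exact hx hm
  · exact h

lemma SP_le_ker (i : Fin m) : SP b (i : ℕ) ≤ LinearMap.ker (b.coord i) := by
  rw [SP, Submodule.span_le]
  rintro y ⟨j, hj, rfl⟩
  have hji : j ≠ i := fun h => absurd hj (by simp [h])
  simp [Module.Basis.coord_apply, Module.Basis.repr_self_apply, hji]

lemma dB_basis (i : Fin m) : dB b (b i) = (i : ℕ) + 1 := by
  apply le_antisymm
  · exact dB_le_of_mem b (Submodule.subset_span ⟨i, Nat.lt_succ_self _, rfl⟩)
  · by_contra h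
    push_neg at h
    have h1 : dB b (b i) ≤ (i : ℕ) := Nat.lt_succ_iff.mp h
    have h2 : b i ∈ SP b (i : ℕ) := mem_SP_of_le b h1
    have := SP_le_ker b i h2
    simp [LinearMap.mem_ker, Module.Basis.coord_apply, Module.Basis.repr_self_apply] at this

lemma add_self_G (x : G) : x + x = 0 := by
  have : (2 : ZMod 2) • x = x + x := two_smul _ x
  rw [show (2 : ZMod 2) = 0 by decide, zero_smul] at this
  exact this.symm

lemma dB_add_eq {x z : G} (h : dB b z < dB b x) : dB b (x + z) = dB b x := by
  apply le_antisymm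
  · exact dB_le_of_mem b (add_mem (mem_SP_dB b x) (mem_SP_of_le b h.le))
  · by_contra hc
    push_neg at hc
    have h1 : dB b (x + z) ≤ dB b x - 1 := Nat.le_sub_one_of_lt hc
    have h2 : dB b z ≤ dB b x - 1 := Nat.le_sub_one_of_lt h
    have h3 : x + z + z ∈ SP b (dB b x - 1) :=
      add_mem (mem_SP_of_le b h1) (mem_SP_of_le b h2)
    rw [add_assoc, add_self_G, add_zero] at h3
    have hpos : 0 < dB b x := lt_of_le_of_lt (Nat.zero_le _) h
    exact not_mem_SP_of_lt b (Nat.sub_lt hpos one_pos) h3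

lemma dB_ge_of_not_ker {x : G} {i : Fin m} (h : x ∉ LinearMap.ker (b.coord i)) :
    (i : ℕ) + 1 ≤ dB b x := by
  by_contra hc
  push_neg at hc
  exact h (SP_le_ker b i (mem_SP_of_le b (Nat.lt_succ_iff.mp hc)))

lemma not_basis_of_not_ker {x : G} {i : Fin m} (h : x ∉ LinearMap.ker (b.coord i))
    (hne : x ≠ b i) : x ∉ Set.range b := by
  rintro ⟨j, rfl⟩
  rcases eq_or_ne j i with rfl | hji
  · exact hne rfl
  · exact h (by simp [LinearMap.mem_ker, Module.Basis.coord_apply, Module.Basis.repr_self_apply, hji])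

end SOMaux


namespace SOMaux

variable (k : Type*) [Field k] [CharP k 2]
  (G : Type*) [AddCommGroup G] [Module (ZMod 2) G] [Fintype G]
  {m : ℕ} (b : Module.Basis (Fin m) (ZMod 2) G)

local notation "X" => {x : G // x ≠ 0}

/-- the generator images in the quotient -/
noncomputable def g (x : X) : RingQuot (ExtRel k G) :=
  RingQuot.mkAlgHom k (ExtRel k G) (FreeAlgebra.ι k x)

/-- image of a word -/
noncomputable def P (l : List X) : RingQuot (ExtRel k G) :=
  (l.map (g k G)).prod

lemma P_append (l₁ l₂ : List X) : P k G (l₁ ++ l₂) = P k G l₁ * P k G l₂ := by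
  simp [P]

lemma P_cons (x : X) (l : List X) : P k G (x :: l) = g k G x * P k G l := by
  simp [P]

lemma P_nil : P k G ([] : List X) = 1 := rfl

lemma char2A (a : RingQuot (ExtRel k G)) : a + a = 0 := by
  have h2 : (2 : k) = 0 := by
    have := CharP.cast_eq_zero k 2
    push_cast at this
    exact this
  calc a + a = (2 : k) • a := (two_smul k a).symm
  _ = 0 := by rw [h2, zero_smul]

lemma eq_of_add_eq_zero' {a c : RingQuot (ExtRel k G)} (h : a + c = 0) : a = c := by
  have h2 : a + (c + c) = (a + c) + c := (add_assoc a c c).symm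
  rw [char2A, h, add_zero, zero_add] at h2
  exact h2

/-- the hyperplane relation in the quotient, for coordinate hyperplanes -/
lemma R1 (i : Fin m) :
    ∑ x ∈ Finset.univ.filter
        (fun x : X => (x : G) ∉ LinearMap.ker (b.coord i)), g k G x = 0 := by
  have hfr : Module.finrank (ZMod 2) (LinearMap.ker (b.coord i)) + 1
      = Module.finrank (ZMod 2) G := by
    have hr : LinearMap.range (b.coord i) = ⊤ := by
      rw [LinearMap.range_eq_top]
      intro c
      exact ⟨c • b i, by simp [Module.Basis.coord_apply, Module.Basis.repr_self_apply]⟩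
    have := LinearMap.finrank_range_add_finrank_ker (b.coord i)
    rw [hr, finrank_top, Module.finrank_self] at this
    omega
  have hrel := RingQuot.mkAlgHom_rel k
    (ExtRel.hyperplane (k := k) (LinearMap.ker (b.coord i)) hfr)
  rw [map_sum, map_zero] at hrel
  exact hrel

/-- eliminate a basis generator -/
lemma basis_elim (i : Fin m) :
    g k G ⟨b i, b.ne_zero i⟩ =
      ∑ x ∈ (Finset.univ.filter
        (fun x : X => (x : G) ∉ LinearMap.ker (b.coord i))).erase ⟨b i, b.ne_zero i⟩,
        g k G x := by
  apply eq_of_add_eq_zero' k G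
  have hmem : (⟨b i, b.ne_zero i⟩ : X) ∈ Finset.univ.filter
      (fun x : X => (x : G) ∉ LinearMap.ker (b.coord i)) := by
    simp [LinearMap.mem_ker, Module.Basis.coord_apply, Module.Basis.repr_self_apply]
  rw [Finset.add_sum_erase _ _ hmem]
  exact R1 k G b i

/-- the commutator rewriting rule -/
lemma comm_rewrite (u z : X) (h : dB b (z : G) < dB b (u : G)) :
    ∀ hw : (u : G) + (z : G) ≠ 0,
    g k G u * g k G z =
      g k G z * g k G u + g k G ⟨(u : G) + z, hw⟩ * g k G u
        + g k G u * g k G ⟨(u : G) + z, hw⟩ := by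
  intro hw
  set w : X := ⟨(u : G) + z, hw⟩ with hwdef
  have hwz : w ≠ z := by
    intro hh
    apply u.2
    have : (u : G) + z = z := congrArg Subtype.val hh
    have := congrArg (fun t => t + (z : G)) this
    simpa [add_assoc, add_self_G] using this
  have hs : (w : G) + (z : G) ≠ 0 := by
    show (u : G) + z + z ≠ 0
    rw [add_assoc, add_self_G, add_zero]
    exact u.2
  have hrel := RingQuot.mkAlgHom_rel k (ExtRel.comm (k := k) w z hwz hs)
  have hu : (⟨(w : G) + z, hs⟩ : X) = u := by
    apply Subtype.ext
    show (u : G) + z + z = u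
    rw [add_assoc, add_self_G, add_zero]
  rw [hu] at hrel
  simp only [map_add, map_mul, map_zero] at hrel
  have hrel' : (g k G w + g k G z) * g k G u + g k G u * (g k G w + g k G z) = 0 := hrel
  apply eq_of_add_eq_zero' k G
  have expand : g k G u * g k G z +
      (g k G z * g k G u + g k G w * g k G u + g k G u * g k G w)
      = (g k G w + g k G z) * g k G u + g k G u * (g k G w + g k G z) := by
    simp only [add_mul, mul_add]
    abel
  rw [expand, hrel']

end SOMaux


namespace SOMaux

section Measure

variable {G : Type*} [AddCommGroup G] [Module (ZMod 2) G] {m : ℕ}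
  (b : Module.Basis (Fin m) (ZMod 2) G)

local notation "X" => {x : G // x ≠ 0}

noncomputable def dv (x : X) : ℕ := dB b (x : G)

noncomputable def sumd : List X → ℕ
  | [] => 0
  | a :: t => dv b a + sumd t

open scoped Classical in
noncomputable def nbas : List X → ℕ
  | [] => 0
  | a :: t => (if (a : G) ∈ Set.range ⇑b then 1 else 0) + nbas t

noncomputable def mu : List X → ℕ
  | [] => 0
  | a :: t => (t.map (fun x => dv b a - dv b x)).sum + mu t

noncomputable def cross (A B : List X) : ℕ :=
  (A.map (fun a => (B.map (fun x => dv b a - dv b x)).sum)).sum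

lemma sumd_append (A B : List X) : sumd b (A ++ B) = sumd b A + sumd b B := by
  induction A with
  | nil => simp [sumd]
  | cons a A ih => rw [List.cons_append, sumd, sumd, ih]; omega

lemma nbas_append (A B : List X) : nbas b (A ++ B) = nbas b A + nbas b B := by
  induction A with
  | nil => simp [nbas]
  | cons a A ih => rw [List.cons_append, nbas, nbas, ih]; omega

lemma list_sum_map_add {α : Type*} (l : List α) (f h : α → ℕ) :
    (l.map (fun a => f a + h a)).sum = (l.map f).sum + (l.map h).sum := by
  induction l with
  | nil => simp
  | cons a t ih => simp only [List.map_cons, List.sum_cons, ih]; omega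

lemma cross_nil_left (B : List X) : cross b ([] : List X) B = 0 := rfl

lemma cross_cons_left (a : X) (A B : List X) :
    cross b (a :: A) B = (B.map (fun x => dv b a - dv b x)).sum + cross b A B := by
  simp [cross]

lemma cross_cons_right (x : X) (A B : List X) :
    cross b A (x :: B) = (A.map (fun a => dv b a - dv b x)).sum + cross b A B := by
  simp only [cross, List.map_cons, List.sum_cons]
  rw [list_sum_map_add]

lemma mu_append (A B : List X) :
    mu b (A ++ B) = mu b A + mu b B + cross b A B := by
  induction A with
  | nil => simp [mu, cross_nil_left]
  | cons a A ih =>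
      rw [List.cons_append, mu, mu, ih, cross_cons_left, List.map_append,
        List.sum_append]
      omega

lemma dv_le (x : X) : dv b x ≤ m := dB_le_m b (x : G)

lemma sumd_le (l : List X) : sumd b l ≤ l.length * m := by
  induction l with
  | nil => simp [sumd]
  | cons a t ih =>
      rw [sumd]
      have h1 : dv b a ≤ m := dv_le b a
      have h2 : (a :: t).length * m = t.length * m + m := by
        simp [List.length_cons]; ring
      omega

lemma nbas_le (l : List X) : nbas b l ≤ l.length := by
  induction l with
  | nil => simp [nbas]
  | cons a t ih =>
      rw [nbas]
      simp only [List.length_cons]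
      split <;> omega

lemma map_sub_sum_le (a : X) (t : List X) :
    (t.map (fun x => dv b a - dv b x)).sum ≤ t.length * m := by
  induction t with
  | nil => simp
  | cons c t ih =>
      have h1 : dv b a - dv b c ≤ m := le_trans (Nat.sub_le _ _) (dv_le b a)
      simp only [List.map_cons, List.sum_cons, List.length_cons]
      have h2 : (t.length + 1) * m = t.length * m + m := by ring
      omega

lemma mu_le (l : List X) : mu b l ≤ l.length * l.length * m := by
  induction l with
  | nil => simp [mu]
  | cons a t ih =>
      have h1 := map_sub_sum_le b a t
      have harith : t.length * m + t.length * t.length * m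
          ≤ (t.length + 1) * (t.length + 1) * m := by nlinarith
      rw [mu]
      simp only [List.length_cons]
      omega

/-- the termination measure -/
noncomputable def Kof (n s nb mu : ℕ) : ℕ :=
  (n * m - s) * ((n + 1) * (n * n * m + 1)) + nb * (n * n * m + 1) + mu

noncomputable def K (l : List X) : ℕ :=
  Kof (m := m) l.length (sumd b l) (nbas b l) (mu b l)

lemma Kof_gt {n s s' nb nb' muv muv' : ℕ} (h1 : s < s') (h2 : s' ≤ n * m)
    (h3 : nb' ≤ n) (h4 : muv' ≤ n * n * m) :
    Kof (m := m) n s' nb' muv' < Kof (m := m) n s nb muv := by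
  unfold Kof
  have e1 : nb' * (n * n * m + 1) ≤ n * (n * n * m + 1) :=
    Nat.mul_le_mul h3 le_rfl
  have key : n * m - s' + 1 ≤ n * m - s := by omega
  calc (n * m - s') * ((n + 1) * (n * n * m + 1)) + nb' * (n * n * m + 1) + muv'
      ≤ (n * m - s') * ((n + 1) * (n * n * m + 1)) + n * (n * n * m + 1)
          + (n * n * m) := add_le_add (add_le_add le_rfl e1) h4
    _ < (n * m - s' + 1) * ((n + 1) * (n * n * m + 1)) := by
        have e2 : (n * m - s' + 1) * ((n + 1) * (n * n * m + 1))
            = (n * m - s') * ((n + 1) * (n * n * m + 1)) + n * (n * n * m + 1)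
              + (n * n * m) + 1 := by ring
        omega
    _ ≤ (n * m - s) * ((n + 1) * (n * n * m + 1)) := Nat.mul_le_mul key le_rfl
    _ ≤ (n * m - s) * ((n + 1) * (n * n * m + 1)) + nb * (n * n * m + 1) + muv :=
        Nat.le_add_right _ _ |>.trans (Nat.le_add_right _ _)

lemma K_gt (A B c c' : List X) (hlen : c'.length = c.length)
    (hsum : sumd b c < sumd b c') :
    K b (A ++ c' ++ B) < K b (A ++ c ++ B) := by
  unfold K
  have hl : (A ++ c' ++ B).length = (A ++ c ++ B).length := by
    simp only [List.length_append, hlen]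
  rw [hl]
  apply Kof_gt
  · rw [sumd_append, sumd_append, sumd_append, sumd_append]; omega
  · rw [← hl]; exact sumd_le b _
  · rw [← hl]; exact nbas_le b _
  · rw [← hl]; exact mu_le b _

lemma K_swap (A B : List X) (u z : X) (h : dv b z < dv b u) :
    K b (A ++ z :: u :: B) < K b (A ++ u :: z :: B) := by
  unfold K
  have hl : (A ++ z :: u :: B).length = (A ++ u :: z :: B).length := by
    simp only [List.length_append, List.length_cons]
  have hs : sumd b (A ++ z :: u :: B) = sumd b (A ++ u :: z :: B) := by
    rw [sumd_append, sumd_append, sumd, sumd, sumd, sumd]; omega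
  have hn : nbas b (A ++ z :: u :: B) = nbas b (A ++ u :: z :: B) := by
    rw [nbas_append, nbas_append, nbas, nbas, nbas, nbas]; omega
  have hm : mu b (A ++ z :: u :: B) < mu b (A ++ u :: z :: B) := by
    rw [mu_append, mu_append, cross_cons_right, cross_cons_right,
      cross_cons_right, cross_cons_right]
    have e1 : mu b (z :: u :: B)
        = ((u :: B).map (fun x => dv b z - dv b x)).sum
          + ((B.map (fun x => dv b u - dv b x)).sum + mu b B) := by
      rw [mu, mu]
    have e2 : mu b (u :: z :: B)
        = ((z :: B).map (fun x => dv b u - dv b x)).sum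
          + ((B.map (fun x => dv b z - dv b x)).sum + mu b B) := by
      rw [mu, mu]
    rw [e1, e2, List.map_cons, List.sum_cons, List.map_cons, List.sum_cons]
    have f1 : dv b z - dv b u = 0 := by omega
    have f2 : 1 ≤ dv b u - dv b z := by omega
    omega
  rw [hl, hs, hn]
  exact Nat.add_lt_add_left hm _

open scoped Classical in
lemma K_basis_lt (A B : List X) (x y : X) (hd : dv b x = dv b y)
    (hx : (x : G) ∉ Set.range ⇑b) (hy : (y : G) ∈ Set.range ⇑b) :
    K b (A ++ x :: B) < K b (A ++ y :: B) := by
  unfold K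
  have hl : (A ++ x :: B).length = (A ++ y :: B).length := by
    simp only [List.length_append, List.length_cons]
  have hs : sumd b (A ++ x :: B) = sumd b (A ++ y :: B) := by
    rw [sumd_append, sumd_append, sumd, sumd, hd]
  have hm : mu b (A ++ x :: B) = mu b (A ++ y :: B) := by
    rw [mu_append, mu_append, cross_cons_right, cross_cons_right, mu, mu, hd]
  have hn : nbas b (A ++ x :: B) < nbas b (A ++ y :: B) := by
    rw [nbas_append, nbas_append, nbas, nbas, if_neg hx, if_pos hy]
    omega
  rw [hl, hs, hm]
  unfold Kof
  have hmul : nbas b (A ++ x :: B) * ((A ++ y :: B).length * (A ++ y :: B).length * m + 1)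
      < nbas b (A ++ y :: B) * ((A ++ y :: B).length * (A ++ y :: B).length * m + 1) :=
    Nat.mul_lt_mul_of_lt_of_le hn le_rfl (by omega)
  omega

end Measure

end SOMaux


namespace SOMaux

lemma exists_bad {α : Type*} (R : α → α → Prop) (l : List α) (h : ¬ List.IsChain R l) :
    ∃ A u z B, l = A ++ u :: z :: B ∧ ¬ R u z := by
  induction l with
  | nil => exact absurd List.isChain_nil h
  | cons a t ih =>
      cases t with
      | nil => exact absurd (List.isChain_singleton a) h
      | cons c t2 =>
          by_cases hac : R a c
          · have h2 : ¬ List.IsChain R (c :: t2) := by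
              intro hc
              exact h (List.isChain_cons_cons.mpr ⟨hac, hc⟩)
            obtain ⟨A, u, z, B, heq, hR⟩ := ih h2
            exact ⟨a :: A, u, z, B, by rw [heq, List.cons_append], hR⟩
          · exact ⟨[], a, c, t2, rfl, hac⟩

variable (k : Type*) [Field k] [CharP k 2]
  (G : Type*) [AddCommGroup G] [Module (ZMod 2) G] [Fintype G]
  {m : ℕ} (b : Module.Basis (Fin m) (ZMod 2) G)

local notation "X" => {x : G // x ≠ 0}

noncomputable def Sspan : Submodule k (RingQuot (ExtRel k G)) :=
  Submodule.span k
    {a : RingQuot (ExtRel k G) | ∃ (n : ℕ) (x : Fin n → {g : G // g ≠ 0}),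
      (∀ i, (x i : G) ∉ Set.range ⇑b) ∧
      (∀ i j : Fin n, i ≤ j → dB b (x i : G) ≤ dB b (x j : G)) ∧
      a = RingQuot.mkAlgHom k (ExtRel k G)
        ((List.ofFn fun i => FreeAlgebra.ι k (x i)).prod)}

lemma P_eq_mk (l : List X) :
    RingQuot.mkAlgHom k (ExtRel k G)
      ((List.ofFn fun i => FreeAlgebra.ι k (l.get i)).prod) = P k G l := by
  have h1 : (List.ofFn fun i => FreeAlgebra.ι k (l.get i))
      = l.map (FreeAlgebra.ι k) := by
    conv_rhs => rw [← List.ofFn_get l]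
    rw [List.map_ofFn]
    rfl
  rw [h1, map_list_prod, List.map_map]
  rfl

lemma special_mem (l : List X) (h1 : ∀ x ∈ l, (x : G) ∉ Set.range ⇑b)
    (h2 : List.IsChain (fun a c => dv b a ≤ dv b c) l) :
    P k G l ∈ Sspan k G b := by
  apply Submodule.subset_span
  refine ⟨l.length, l.get, fun i => h1 _ (List.get_mem l i), ?_, (P_eq_mk k G l).symm⟩
  haveI : IsTrans {x : G // x ≠ 0} (fun a c => dv b a ≤ dv b c) :=
    ⟨fun _ _ _ hab hbc => le_trans hab hbc⟩
  intro i j hij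
  rcases eq_or_lt_of_le hij with rfl | hlt
  · exact le_rfl
  · exact List.pairwise_iff_get.mp (List.isChain_iff_pairwise.mp h2) i j hlt

open scoped Classical in
lemma words_mem : ∀ (n : ℕ) (l : List X), K b l < n → P k G l ∈ Sspan k G b := by
  intro n
  induction n with
  | zero => exact fun l h => absurd h (Nat.not_lt_zero _)
  | succ n ih =>
      intro l hK
      by_cases hch : List.IsChain (fun a c => dv b a ≤ dv b c) l
      · by_cases hba : ∀ x ∈ l, (x : G) ∉ Set.range ⇑b
        · exact special_mem k G b l hba hch
        · push_neg at hba
          obtain ⟨y, hyl, hyb⟩ := hba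
          obtain ⟨A, B, hl⟩ := List.append_of_mem hyl
          obtain ⟨i, hbi⟩ := hyb
          have hy' : y = ⟨b i, b.ne_zero i⟩ := Subtype.ext hbi.symm
          rw [hl] at hK ⊢
          have hP : P k G (A ++ y :: B) = P k G A * (g k G y * P k G B) := by
            rw [P_append, P_cons]
          rw [hP, hy', basis_elim k G b i, Finset.sum_mul, Finset.mul_sum]
          apply Submodule.sum_mem
          intro x hx
          have hPx : P k G A * (g k G x * P k G B) = P k G (A ++ x :: B) := by
            rw [P_append, P_cons]
          rw [hPx]
          rw [Finset.mem_erase] at hx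
          obtain ⟨hxne, hxf⟩ := hx
          rw [Finset.mem_filter] at hxf
          have hxk : (x : G) ∉ LinearMap.ker (b.coord i) := hxf.2
          have hxnb : (x : G) ∉ Set.range ⇑b :=
            not_basis_of_not_ker b hxk (fun h => hxne (Subtype.ext h))
          have hdx : (i : ℕ) + 1 ≤ dB b (x : G) := dB_ge_of_not_ker b hxk
          have hdy : dv b y = (i : ℕ) + 1 := by
            rw [hy']
            exact dB_basis b i
          rcases eq_or_lt_of_le hdx with heq | hlt
          · apply ih
            have hKlt : K b (A ++ x :: B) < K b (A ++ y :: B) := by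
              apply K_basis_lt b A B x y _ hxnb ⟨i, hbi⟩
              rw [hdy]
              exact heq.symm
            omega
          · apply ih
            have e : A ++ [x] ++ B = A ++ x :: B := by simp
            have e' : A ++ [y] ++ B = A ++ y :: B := by simp
            have hKlt : K b (A ++ x :: B) < K b (A ++ y :: B) := by
              rw [← e, ← e']
              apply K_gt b A B [y] [x] rfl
              show sumd b [y] < sumd b [x]
              rw [show sumd b [y] = dv b y + 0 from rfl, show sumd b [x] = dv b x + 0 from rfl, hdy]
              exact Nat.add_lt_add_right hlt 0
            omega
      · obtain ⟨A, u, z, B, hl, hR⟩ := exists_bad _ l hch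
        have hlt : dv b z < dv b u := Nat.lt_of_not_le hR
        have hw : (u : G) + (z : G) ≠ 0 := by
          intro h0
          have huz : (u : G) = z := by
            have h2 := congrArg (fun t => t + (z : G)) h0
            simpa [add_assoc, add_self_G] using h2
          rw [show dv b z = dB b (z : G) from rfl, show dv b u = dB b (u : G) from rfl,
            huz] at hlt
          omega
        set w : X := ⟨(u : G) + z, hw⟩ with hwdef
        have hdw : dv b w = dv b u := dB_add_eq b hlt
        rw [hl] at hK ⊢
        have hP : P k G (A ++ u :: z :: B)
            = P k G A * ((g k G u * g k G z) * P k G B) := by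
          rw [P_append, P_cons, P_cons, mul_assoc]
        rw [hP, comm_rewrite k G b u z hlt hw]
        have hexp : P k G A * ((g k G z * g k G u + g k G w * g k G u
              + g k G u * g k G w) * P k G B)
            = P k G (A ++ z :: u :: B) + P k G (A ++ w :: u :: B)
              + P k G (A ++ u :: w :: B) := by
          rw [P_append, P_cons, P_cons, P_append, P_cons, P_cons,
            P_append, P_cons, P_cons]
          simp only [add_mul, mul_add, mul_assoc]
        rw [hexp]
        have h1 : K b (A ++ z :: u :: B) < K b (A ++ u :: z :: B) := K_swap b A B u z hlt
        have key2 : ∀ c1 c2 : X, dv b c1 + dv b c2 > dv b u + dv b z →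
            K b (A ++ c1 :: c2 :: B) < K b (A ++ u :: z :: B) := by
          intro c1 c2 hgt
          have e : A ++ [c1, c2] ++ B = A ++ c1 :: c2 :: B := by simp
          have e' : A ++ [u, z] ++ B = A ++ u :: z :: B := by simp
          rw [← e, ← e']
          apply K_gt b A B [u, z] [c1, c2] rfl
          show sumd b [u, z] < sumd b [c1, c2]
          rw [show sumd b [u, z] = dv b u + (dv b z + 0) from rfl,
            show sumd b [c1, c2] = dv b c1 + (dv b c2 + 0) from rfl]
          omega
        have h2 : K b (A ++ w :: u :: B) < K b (A ++ u :: z :: B) :=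
          key2 w u (by omega)
        have h3 : K b (A ++ u :: w :: B) < K b (A ++ u :: z :: B) :=
          key2 u w (by omega)
        exact add_mem (add_mem (ih _ (by omega)) (ih _ (by omega))) (ih _ (by omega))

open scoped Pointwise in
lemma mk_mem (f : FreeAlgebra k X) :
    RingQuot.mkAlgHom k (ExtRel k G) f ∈ Sspan k G b := by
  have hWS : Set.range (P k G) ⊆ (Sspan k G b : Set _) := by
    rintro _ ⟨l, rfl⟩
    exact words_mem k G b (K b l + 1) l (Nat.lt_succ_self _)
  have hW : RingQuot.mkAlgHom k (ExtRel k G) f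
      ∈ Submodule.span k (Set.range (P k G)) := by
    induction f using FreeAlgebra.induction with
    | grade0 r =>
        rw [AlgHom.commutes, Algebra.algebraMap_eq_smul_one]
        exact Submodule.smul_mem _ r (Submodule.subset_span ⟨[], P_nil k G⟩)
    | grade1 x =>
        refine Submodule.subset_span ⟨[x], ?_⟩
        show g k G x * 1 = _
        rw [mul_one]
        rfl
    | mul a1 a2 ha1 ha2 =>
        rw [map_mul]
        have hmm := Submodule.mul_mem_mul ha1 ha2
        rw [Submodule.span_mul_span] at hmm
        have hsub : (Set.range (P k G)) * (Set.range (P k G))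
            ⊆ Set.range (P k G) := by
          intro t ht
          rw [Set.mem_mul] at ht
          obtain ⟨p, ⟨l1, rfl⟩, q, ⟨l2, rfl⟩, hpq⟩ := ht
          exact ⟨l1 ++ l2, by rw [P_append]; exact hpq⟩
        exact Submodule.span_le.mpr (hsub.trans Submodule.subset_span) hmm
    | add a1 a2 ha1 ha2 =>
        rw [map_add]
        exact add_mem ha1 ha2
  exact Submodule.span_le.mpr hWS hW

end SOMaux

/-- The algebra `Ẽ` (the quotient of the free algebra on the `γ_x`,
`x ∈ G∖{0}` by the hyperplane and commutator relations) is spanned over `k` by the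
special ordered monomials `γ_{x₁}⋯γ_{x_n}` with all `x_i ∈ G∖(B∪{0})` and
`d(x₁) ≤ ⋯ ≤ d(x_n)`. -/
theorem span_specialOrderedMonomials (k : Type*) [Field k] [CharP k 2]
    (G : Type*) [AddCommGroup G] [Module (ZMod 2) G] [Fintype G]
    {m : ℕ} (b : Module.Basis (Fin m) (ZMod 2) G) :
    Submodule.span k
      {a : RingQuot (ExtRel k G) | ∃ (n : ℕ) (x : Fin n → {g : G // g ≠ 0}),
        (∀ i, (x i : G) ∉ Set.range ⇑b) ∧
        (∀ i j : Fin n, i ≤ j → dB b (x i : G) ≤ dB b (x j : G)) ∧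
        a = RingQuot.mkAlgHom k (ExtRel k G)
          ((List.ofFn fun i => FreeAlgebra.ι k (x i)).prod)} = ⊤ := by
  rw [eq_top_iff]
  intro a _
  obtain ⟨f, rfl⟩ := RingQuot.mkAlgHom_surjective k (ExtRel k G) a
  exact SOMaux.mk_mem k G b f
end

section
/- With Ẽ as below, let x₁, …, x_n be elements of G∖(B∪{0}) and let i ∈ {1,…,n−1} be an index with d(x_i) ≠ d(x_{i+1}). Then the element γ_{x₁}⋯γ_{x_{i−1}}γ_{x_i}γ_{x_{i+1}}γ_{x_{i+2}}⋯γ_{x_n} + γ_{x₁}⋯γ_{x_{i−1}}γ_{x_{i+1}}γ_{x_i}γ_{x_{i+2}}⋯γ_{x_n} of Ẽ lies in the k-linear span of the monomials γ_{y₁}⋯γ_{y_n} with all y_j ∈ G∖(B∪{0}) and Σ_{j=1}^n d(y_j) > Σ_{j=1}^n d(x_j). -/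
open scoped Classical

section AuxDB

variable {G : Type*} [AddCommGroup G] [Module (ZMod 2) G] {m : ℕ}
  (b : Module.Basis (Fin m) (ZMod 2) G)

noncomputable def sS (i : ℕ) : Submodule (ZMod 2) G :=
  Submodule.span (ZMod 2) {y : G | ∃ j : Fin m, (j : ℕ) < i ∧ y = b j}

lemma dB_eq (x : G) : dB b x = sInf {i : ℕ | x ∈ sS b i} := rfl

lemma sS_mono {i i' : ℕ} (h : i ≤ i') : sS b i ≤ sS b i' :=
  Submodule.span_mono (fun y ⟨j, hj, hy⟩ => ⟨j, lt_of_lt_of_le hj h, hy⟩)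

lemma sS_top : sS b m = ⊤ := by
  have he : {y : G | ∃ j : Fin m, (j : ℕ) < m ∧ y = b j} = Set.range b := by
    ext y
    constructor
    · rintro ⟨j, _, rfl⟩; exact ⟨j, rfl⟩
    · rintro ⟨j, rfl⟩; exact ⟨j, j.isLt, rfl⟩
  rw [sS, he, b.span_eq]

lemma mem_sS_dB (x : G) : x ∈ sS b (dB b x) := by
  have hne : {i : ℕ | x ∈ sS b i}.Nonempty := ⟨m, by rw [Set.mem_setOf_eq, sS_top]; trivial⟩
  have := Nat.sInf_mem hne
  rwa [← dB_eq] at this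

lemma dB_le {x : G} {i : ℕ} (h : x ∈ sS b i) : dB b x ≤ i := Nat.sInf_le h

lemma lt_dB {x : G} {i : ℕ} (h : x ∉ sS b i) : i < dB b x := by
  by_contra hc
  exact h (sS_mono b (le_of_not_gt hc) (mem_sS_dB b x))

lemma G_add_self (x : G) : x + x = 0 := by
  have h := two_smul (ZMod 2) x
  rw [show (2 : ZMod 2) = 0 by decide] at h
  simpa using h.symm

lemma dB_add {u v : G} (h : dB b u < dB b v) : dB b (u + v) = dB b v := by
  apply le_antisymm
  · exact dB_le b (Submodule.add_mem _ (sS_mono b h.le (mem_sS_dB b u)) (mem_sS_dB b v))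
  · by_contra hc
    push_neg at hc
    have hv : v = u + (u + v) := by rw [← add_assoc, G_add_self, zero_add]
    have hmem : u + (u + v) ∈ sS b (max (dB b u) (dB b (u + v))) :=
      Submodule.add_mem _ (sS_mono b (le_max_left _ _) (mem_sS_dB b u))
        (sS_mono b (le_max_right _ _) (mem_sS_dB b (u + v)))
    rw [← hv] at hmem
    exact absurd (dB_le b hmem) (not_le_of_gt (max_lt h hc))

lemma coord_eq_zero {i : ℕ} (j : Fin m) (hij : i ≤ (j : ℕ)) {x : G} (hx : x ∈ sS b i) :
    b.coord j x = 0 := by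
  have hle : sS b i ≤ LinearMap.ker (b.coord j) := by
    rw [sS, Submodule.span_le]
    rintro y ⟨l, hl, rfl⟩
    have hlj : l ≠ j := by
      intro h; subst h; omega
    simp [LinearMap.mem_ker, Module.Basis.coord_apply, Module.Basis.repr_self, Finsupp.single_apply, hlj]
  simpa using hle hx

lemma dB_basis_le (j : Fin m) : dB b (b j) ≤ (j : ℕ) + 1 :=
  dB_le b (Submodule.subset_span ⟨j, by omega, rfl⟩)

end AuxDB

lemma ofFn_prod_decomp {M : Type*} [Monoid M] {n : ℕ} (f : Fin n → M) (i : ℕ)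
    (hi : i + 1 < n) :
    (List.ofFn f).prod =
      ((List.ofFn f).take i).prod * f ⟨i, by omega⟩ * f ⟨i + 1, hi⟩ *
        ((List.ofFn f).drop (i + 2)).prod := by
  conv_lhs => rw [← List.take_append_drop i (List.ofFn f)]
  rw [List.prod_append,
    List.drop_eq_getElem_cons (show i < (List.ofFn f).length by simp; omega),
    List.drop_eq_getElem_cons (show i + 1 < (List.ofFn f).length by simp; omega),
    List.prod_cons, List.prod_cons]
  simp [List.getElem_ofFn, mul_assoc]

lemma ofFn_take_eq {M : Type*} {n : ℕ} (f h : Fin n → M) (i : ℕ)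
    (hagree : ∀ j : Fin n, (j : ℕ) < i → f j = h j) :
    (List.ofFn f).take i = (List.ofFn h).take i := by
  apply List.ext_getElem (by simp)
  intro j h1 h2
  have hj : j < i := by simp at h1; omega
  simp only [List.getElem_take, List.getElem_ofFn]
  exact hagree _ hj

lemma ofFn_drop_eq {M : Type*} {n : ℕ} (f h : Fin n → M) (i : ℕ)
    (hagree : ∀ j : Fin n, i ≤ (j : ℕ) → f j = h j) :
    (List.ofFn f).drop i = (List.ofFn h).drop i := by
  apply List.ext_getElem (by simp)
  intro j h1 h2
  simp only [List.getElem_drop, List.getElem_ofFn]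
  exact hagree _ (Nat.le_add_right i j)

lemma ofFn_prod_eq' {M : Type*} [Monoid M] {n : ℕ} (f h : Fin n → M) (i : ℕ)
    (hi : i + 1 < n)
    (hagree : ∀ j : Fin n, (j : ℕ) ≠ i → (j : ℕ) ≠ i + 1 → f j = h j) :
    (List.ofFn h).prod =
      ((List.ofFn f).take i).prod * h ⟨i, by omega⟩ * h ⟨i + 1, hi⟩ *
        ((List.ofFn f).drop (i + 2)).prod := by
  rw [ofFn_prod_decomp h i hi,
    ← ofFn_take_eq f h i (fun j hj => hagree j (by omega) (by omega)),
    ← ofFn_drop_eq f h (i + 2) (fun j hj => hagree j (by omega) (by omega))]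

section Main

variable (k : Type*) [Field k] [CharP k 2]
    (G : Type*) [AddCommGroup G] [Module (ZMod 2) G] [Fintype G]
    {m : ℕ} (b : Module.Basis (Fin m) (ZMod 2) G)

local notation "π" => RingQuot.mkAlgHom k (ExtRel k G)

noncomputable def gam (z : {x : G // x ≠ 0}) : RingQuot (ExtRel k G) :=
  RingQuot.mkAlgHom k (ExtRel k G) (FreeAlgebra.ι k z)

local notation "gg" => gam k G

lemma E_add_self (a : RingQuot (ExtRel k G)) : a + a = 0 := by
  have h := two_smul k a
  have h2 : (2 : k) = 0 := by exact_mod_cast CharP.cast_eq_zero k 2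
  rw [h2] at h
  simpa using h.symm

lemma E_eq_of_add_eq_zero {a c : RingQuot (ExtRel k G)} (h : a + c = 0) : a = c := by
  have h3 : a + c + c = c := by rw [h, zero_add]
  rwa [add_assoc, E_add_self, add_zero] at h3

lemma comm_identity (u v : {x : G // x ≠ 0}) (hne : (u : G) + (v : G) ≠ 0) :
    gg u * gg v + gg v * gg u
      = gg ⟨(u : G) + v, hne⟩ * gg v + gg v * gg ⟨(u : G) + v, hne⟩ := by
  set w : {x : G // x ≠ 0} := ⟨(u : G) + v, hne⟩ with hw
  have hq : (u : G) + (w : G) ≠ 0 := by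
    rw [hw, ← add_assoc, G_add_self, zero_add]
    exact v.2
  have hxy : u ≠ w := by
    intro h
    apply v.2
    have : (u : G) = (u : G) + v := congrArg Subtype.val h
    calc (v : G) = ((u:G) + u) + v := by rw [G_add_self, zero_add]
    _ = (u:G) + ((u:G) + v) := by rw [add_assoc]
    _ = (u:G) + (u:G) := by rw [← this]
    _ = 0 := G_add_self _
  have hwv : (⟨(u : G) + w, hq⟩ : {x : G // x ≠ 0}) = v := by
    apply Subtype.ext
    show (u : G) + ((u : G) + v) = v
    rw [← add_assoc, G_add_self, zero_add]
  have hrel := RingQuot.mkAlgHom_rel k (ExtRel.comm (k := k) (G := G) u w hxy hq)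
  rw [hwv, map_zero] at hrel
  simp only [map_add, map_mul] at hrel
  apply E_eq_of_add_eq_zero k G
  have expand : gg u * gg v + gg v * gg u + (gg w * gg v + gg v * gg w)
      = (gg u + gg w) * gg v + gg v * (gg u + gg w) := by noncomm_ring
  rw [expand]
  simp only [gam]
  exact hrel

lemma expand_gamma (w : {x : G // x ≠ 0}) :
    ∃ S : Finset {x : G // x ≠ 0},
      (∀ z ∈ S, ((z : G)) ∉ Set.range ⇑b ∧ dB b (w : G) ≤ dB b (z : G)) ∧
      gg w = ∑ z ∈ S, gg z := by
  by_cases hw : (w : G) ∈ Set.range ⇑b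
  · obtain ⟨j, hj⟩ := hw
    set H : Submodule (ZMod 2) G := LinearMap.ker (b.coord j) with hHdef
    have hH : Module.finrank (ZMod 2) H + 1 = Module.finrank (ZMod 2) G := by
      have h1 := LinearMap.finrank_range_add_finrank_ker (b.coord j)
      have hsurj : LinearMap.range (b.coord j) = ⊤ := by
        rw [LinearMap.range_eq_top]
        intro c
        exact ⟨c • b j, by simp [Module.Basis.coord_apply, Module.Basis.repr_self]⟩
      rw [hsurj, finrank_top, Module.finrank_self, ← hHdef] at h1
      omega
    have hrel := RingQuot.mkAlgHom_rel k (ExtRel.hyperplane (k := k) (G := G) H hH)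
    rw [map_zero, map_sum] at hrel
    set F := Finset.univ.filter (fun z : {x : G // x ≠ 0} => (z : G) ∉ H) with hF
    set bj : {x : G // x ≠ 0} := ⟨b j, b.ne_zero j⟩ with hbj
    have hbjF : bj ∈ F := by
      simp only [hF, Finset.mem_filter, Finset.mem_univ, true_and, hHdef,
        LinearMap.mem_ker]
      simp [hbj, Module.Basis.coord_apply, Module.Basis.repr_self]
    have hsum : gg bj + ∑ z ∈ F.erase bj, gg z = 0 := by
      simp only [gam]
      rw [Finset.add_sum_erase _ (fun z : {x : G // x ≠ 0} => π (FreeAlgebra.ι k z)) hbjF]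
      exact hrel
    have hwbj : w = bj := Subtype.ext hj.symm
    refine ⟨F.erase bj, ?_, ?_⟩
    · intro z hz
      have hzne : z ≠ bj := Finset.ne_of_mem_erase hz
      have hzF : z ∈ F := Finset.mem_of_mem_erase hz
      have hcoord : b.coord j (z : G) ≠ 0 := by
        simpa [hF, hHdef, LinearMap.mem_ker] using hzF
      have hznotS : (z : G) ∉ sS b (j : ℕ) :=
        fun hmem => hcoord (coord_eq_zero b j le_rfl hmem)
      have hdz : (j : ℕ) + 1 ≤ dB b (z : G) := lt_dB b hznotS
      constructor
      · rintro ⟨l, hl⟩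
        rcases eq_or_ne l j with rfl | hlj
        · exact hzne (Subtype.ext hl.symm)
        · apply hcoord
          rw [← hl]
          simp [Module.Basis.coord_apply, Module.Basis.repr_self, Finsupp.single_apply, hlj]
      · calc dB b (w : G) = dB b (b j) := by rw [hwbj]
        _ ≤ (j : ℕ) + 1 := dB_basis_le b j
        _ ≤ dB b (z : G) := hdz
    · rw [hwbj]
      exact E_eq_of_add_eq_zero k G hsum
  · refine ⟨{w}, ?_, by rw [Finset.sum_singleton]⟩
    rintro z hz
    rw [Finset.mem_singleton] at hz
    subst hz
    exact ⟨hw, le_rfl⟩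

lemma hmap_lemma {n : ℕ} (y : Fin n → {g : G // g ≠ 0}) :
    π ((List.ofFn fun j => FreeAlgebra.ι k (y j)).prod)
      = (List.ofFn fun j => gam k G (y j)).prod := by
  rw [map_list_prod, List.map_ofFn]
  rfl

theorem exchange_aux (n : ℕ) (x : Fin n → {g : G // g ≠ 0})
    (hx : ∀ j, (x j : G) ∉ Set.range ⇑b)
    (i : Fin n) (hi : (i : ℕ) + 1 < n)
    (hd : dB b (x i : G) < dB b (x ⟨(i : ℕ) + 1, hi⟩ : G)) :
    RingQuot.mkAlgHom k (ExtRel k G) ((List.ofFn fun j => FreeAlgebra.ι k (x j)).prod) +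
      RingQuot.mkAlgHom k (ExtRel k G)
        ((List.ofFn fun j =>
          FreeAlgebra.ι k (x (Equiv.swap i ⟨(i : ℕ) + 1, hi⟩ j))).prod) ∈
    Submodule.span k
      {a : RingQuot (ExtRel k G) | ∃ y : Fin n → {g : G // g ≠ 0},
        (∀ j, (y j : G) ∉ Set.range ⇑b) ∧
        (∑ j, dB b (x j : G)) < (∑ j, dB b (y j : G)) ∧
        a = RingQuot.mkAlgHom k (ExtRel k G)
          ((List.ofFn fun j => FreeAlgebra.ι k (y j)).prod)} := by
  classical
  set i1 : Fin n := ⟨(i : ℕ) + 1, hi⟩ with hi1def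
  have hii1 : i ≠ i1 := by
    intro h
    have : (i : ℕ) = (i : ℕ) + 1 := congrArg Fin.val h
    omega
  have hne : (x i : G) + (x i1 : G) ≠ 0 := by
    intro h0
    have h2 := congrArg (fun t => t + (x i1 : G)) h0
    simp only [add_assoc, G_add_self, add_zero, zero_add] at h2
    rw [h2] at hd
    exact lt_irrefl _ hd
  set w : {g : G // g ≠ 0} := ⟨(x i : G) + (x i1 : G), hne⟩ with hwdef
  have hdw : dB b (w : G) = dB b (x i1 : G) := dB_add b hd
  have hcomm := comm_identity k G (x i) (x i1) hne
  rw [← hwdef] at hcomm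
  obtain ⟨S, hS, hgw⟩ := expand_gamma k G b w
  have hdz : ∀ z ∈ S, dB b (x i1 : G) ≤ dB b (z : G) := by
    intro z hz
    rw [← hdw]
    exact (hS z hz).2
  set A : RingQuot (ExtRel k G) :=
    ((List.ofFn fun j => gam k G (x j)).take (i : ℕ)).prod with hA
  set B : RingQuot (ExtRel k G) :=
    ((List.ofFn fun j => gam k G (x j)).drop ((i : ℕ) + 2)).prod with hB
  have hP1 : π ((List.ofFn fun j => FreeAlgebra.ι k (x j)).prod)
      = A * gam k G (x i) * gam k G (x i1) * B := by
    rw [hmap_lemma, ofFn_prod_decomp (fun j => gam k G (x j)) (i : ℕ) hi]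
  have hP2 : π ((List.ofFn fun j =>
        FreeAlgebra.ι k (x (Equiv.swap i i1 j))).prod)
      = A * gam k G (x i1) * gam k G (x i) * B := by
    rw [hmap_lemma,
      ofFn_prod_eq' (fun j => gam k G (x j)) (fun j => gam k G (x (Equiv.swap i i1 j)))
        (i : ℕ) hi ?hagree]
    case hagree =>
      intro j hj1 hj2
      show gam k G (x j) = gam k G (x (Equiv.swap i i1 j))
      rw [Equiv.swap_apply_of_ne_of_ne (Fin.ne_of_val_ne hj1)
        (show j ≠ i1 from Fin.ne_of_val_ne hj2)]
    show _ = A * gam k G (x i1) * gam k G (x i) * B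
    have e1 : (Equiv.swap i i1) (⟨(i : ℕ), by omega⟩ : Fin n) = i1 := by
      rw [show (⟨(i : ℕ), by omega⟩ : Fin n) = i from rfl, Equiv.swap_apply_left]
    have e2 : (Equiv.swap i i1) (⟨(i : ℕ) + 1, hi⟩ : Fin n) = i := by
      rw [show (⟨(i : ℕ) + 1, hi⟩ : Fin n) = i1 from rfl, Equiv.swap_apply_right]
    simp only [e1, e2]
    rfl
  rw [hP1, hP2]
  have hsplit : A * gam k G (x i) * gam k G (x i1) * B
      + A * gam k G (x i1) * gam k G (x i) * B
      = ∑ z ∈ S, (A * gam k G z * gam k G (x i1) * B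
          + A * gam k G (x i1) * gam k G z * B) := by
    have e1 : A * gam k G (x i) * gam k G (x i1) * B
        + A * gam k G (x i1) * gam k G (x i) * B
        = A * (gam k G (x i) * gam k G (x i1) + gam k G (x i1) * gam k G (x i)) * B := by
      noncomm_ring
    rw [e1, hcomm, hgw, Finset.sum_mul, Finset.mul_sum, ← Finset.sum_add_distrib,
      Finset.mul_sum, Finset.sum_mul]
    exact Finset.sum_congr rfl fun z _ => by noncomm_ring
  rw [hsplit]
  apply Submodule.sum_mem
  intro z hz
  obtain ⟨hz1, _⟩ := hS z hz
  apply Submodule.add_mem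
  · apply Submodule.subset_span
    refine ⟨Function.update x i z, ?_, ?_, ?_⟩
    · intro j
      rcases eq_or_ne j i with rfl | hj
      · rw [Function.update_self]; exact hz1
      · rw [Function.update_of_ne hj]; exact hx j
    · apply Finset.sum_lt_sum
      · intro j _
        rcases eq_or_ne j i with rfl | hj
        · rw [Function.update_self]
          exact le_of_lt (lt_of_lt_of_le hd (hdz z hz))
        · rw [Function.update_of_ne hj]
      · exact ⟨i, Finset.mem_univ i, by
          rw [Function.update_self]
          exact lt_of_lt_of_le hd (hdz z hz)⟩
    · rw [hmap_lemma,
        ofFn_prod_eq' (fun j => gam k G (x j)) (fun j => gam k G (Function.update x i z j))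
          (i : ℕ) hi (fun j hj1 _ => by
            show gam k G (x j) = gam k G (Function.update x i z j)
            rw [Function.update_of_ne (Fin.ne_of_val_ne hj1)])]
      simp only [Fin.eta]
      rw [show (⟨(i : ℕ) + 1, hi⟩ : Fin n) = i1 from rfl,
        Function.update_self, Function.update_of_ne (Ne.symm hii1)]
  · apply Submodule.subset_span
    refine ⟨Function.update (Function.update x i (x i1)) i1 z, ?_, ?_, ?_⟩
    · intro j
      rcases eq_or_ne j i1 with rfl | hj1
      · rw [Function.update_self]; exact hz1
      · rw [Function.update_of_ne hj1]
        rcases eq_or_ne j i with rfl | hj2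
        · rw [Function.update_self]; exact hx i1
        · rw [Function.update_of_ne hj2]; exact hx j
    · apply Finset.sum_lt_sum
      · intro j _
        rcases eq_or_ne j i1 with rfl | hj1
        · rw [Function.update_self]; exact hdz z hz
        · rw [Function.update_of_ne hj1]
          rcases eq_or_ne j i with rfl | hj2
          · rw [Function.update_self]; exact le_of_lt hd
          · rw [Function.update_of_ne hj2]
      · refine ⟨i, Finset.mem_univ i, ?_⟩
        rw [Function.update_of_ne hii1, Function.update_self]
        exact hd
    · rw [hmap_lemma,
        ofFn_prod_eq' (fun j => gam k G (x j))
          (fun j => gam k G (Function.update (Function.update x i (x i1)) i1 z j))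
          (i : ℕ) hi (fun j hj1 hj2 => by
            show gam k G (x j)
              = gam k G (Function.update (Function.update x i (x i1)) i1 z j)
            rw [Function.update_of_ne (show j ≠ i1 from Fin.ne_of_val_ne hj2),
              Function.update_of_ne (Fin.ne_of_val_ne hj1)])]
      simp only [Fin.eta]
      rw [show (⟨(i : ℕ) + 1, hi⟩ : Fin n) = i1 from rfl,
        Function.update_self, Function.update_of_ne hii1, Function.update_self]

end Main

/-- (Exchange lemma.) If `x₁, …, x_n ∈ G∖(B∪{0})` and
`d(x_i) ≠ d(x_{i+1})`, then in `Ẽ` the sum of the monomial `γ_{x₁}⋯γ_{x_n}` and the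
monomial obtained by exchanging the `i`-th and `(i+1)`-st factors lies in the span of
the special monomials of the same length with strictly larger total weight
`Σ_j d(y_j)`. -/
theorem exchange_mem_span_higher_weight (k : Type*) [Field k] [CharP k 2]
    (G : Type*) [AddCommGroup G] [Module (ZMod 2) G] [Fintype G]
    {m : ℕ} (b : Module.Basis (Fin m) (ZMod 2) G)
    (n : ℕ) (x : Fin n → {g : G // g ≠ 0})
    (hx : ∀ j, (x j : G) ∉ Set.range ⇑b)
    (i : Fin n) (hi : (i : ℕ) + 1 < n)
    (hd : dB b (x i : G) ≠ dB b (x ⟨(i : ℕ) + 1, hi⟩ : G)) :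
    RingQuot.mkAlgHom k (ExtRel k G) ((List.ofFn fun j => FreeAlgebra.ι k (x j)).prod) +
      RingQuot.mkAlgHom k (ExtRel k G)
        ((List.ofFn fun j =>
          FreeAlgebra.ι k (x (Equiv.swap i ⟨(i : ℕ) + 1, hi⟩ j))).prod) ∈
    Submodule.span k
      {a : RingQuot (ExtRel k G) | ∃ y : Fin n → {g : G // g ≠ 0},
        (∀ j, (y j : G) ∉ Set.range ⇑b) ∧
        (∑ j, dB b (x j : G)) < (∑ j, dB b (y j : G)) ∧
        a = RingQuot.mkAlgHom k (ExtRel k G)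
          ((List.ofFn fun j => FreeAlgebra.ι k (y j)).prod)} := by
  rcases lt_or_gt_of_ne hd with h | h
  · exact exchange_aux k G b n x hx i hi h
  · have key := exchange_aux k G b n
      (fun j => x (Equiv.swap i ⟨(i : ℕ) + 1, hi⟩ j))
      (fun j => hx (Equiv.swap i ⟨(i : ℕ) + 1, hi⟩ j)) i hi
      (by simp only [Equiv.swap_apply_left, Equiv.swap_apply_right]; exact h)
    simp only [Equiv.swap_apply_self] at key
    have e2 : (∑ j, dB b ((x (Equiv.swap i ⟨(i : ℕ) + 1, hi⟩ j)) : G))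
        = ∑ j, dB b ((x j : G)) :=
      Equiv.sum_comp (Equiv.swap i ⟨(i : ℕ) + 1, hi⟩) fun j => dB b ((x j : G))
    rw [e2] at key
    rw [add_comm] at key
    exact key
end

section
/- Let p be a prime, Q a vector space of dimension n over the field F_p, and fix a complete flag 0 = H_0 < H_1 < ⋯ < H_n = Q (dim H_i = i). Then the number of complete flags Q = X_0 > X_1 > ⋯ > X_{n−1} > X_n = 0 (dim X_i = n−i) such that X_i ⊕ H_i = Q for all 0 ≤ i ≤ n equals p^{n(n−1)/2}, i.e. there are exactly p^{\binom{n}{2}} complete flags opposite to a given complete flag of Q. -/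
open Module Submodule

lemma aux_indep {K Q : Type*} [Field K] [AddCommGroup Q] [Module K Q]
    {m : ℕ} (W : Fin m → Submodule K Q) (v : Fin m → Q)
    (hmem : ∀ k j : Fin m, k < j → v k ∈ W j) (hnot : ∀ j, v j ∉ W j) :
    LinearIndependent K v := by
  induction m with
  | zero => exact linearIndependent_empty_type
  | succ m ih =>
    have hv : v = Fin.snoc (fun k => v k.castSucc) (v (Fin.last m)) := by
      funext j
      cases j using Fin.lastCases <;> simp
    rw [hv, linearIndependent_fin_snoc]
    refine ⟨ih (fun k => W k.castSucc) _ (fun k j h => hmem _ _ (by simpa using h))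
        (fun j => hnot _), fun hsp => hnot (Fin.last m) ?_⟩
    have hle : Submodule.span K (Set.range fun k : Fin m => v k.castSucc) ≤ W (Fin.last m) := by
      rw [Submodule.span_le]
      rintro x ⟨k, rfl⟩
      exact hmem _ _ (Fin.castSucc_lt_last k)
    exact hle hsp

lemma aux_cardlt (n m : ℕ) (hm : m ≤ n) : Nat.card {j : Fin n // (j : ℕ) < m} = m := by
  rw [Nat.card_eq_of_bijective (f := fun j : {j : Fin n // (j : ℕ) < m} => (⟨(j : Fin n), j.2⟩ : Fin m)) ?_]
  · simp
  · constructor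
    · rintro ⟨a, ha⟩ ⟨b, hb⟩ h
      simpa [Fin.ext_iff] using congrArg Fin.val h
    · rintro ⟨k, hk⟩
      exact ⟨⟨⟨k, lt_of_lt_of_le hk hm⟩, hk⟩, rfl⟩

lemma aux_cardge (n m : ℕ) (hm : m ≤ n) : Nat.card {j : Fin n // m ≤ (j : ℕ)} = n - m := by
  rw [Nat.card_eq_of_bijective (f := fun j : {j : Fin n // m ≤ (j : ℕ)} =>
      (⟨(j.1 : ℕ) - m, by have := j.1.isLt; have := j.2; omega⟩ : Fin (n - m))) ?_]
  · simp
  · constructor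
    · rintro ⟨⟨a, ha⟩, ha'⟩ ⟨⟨b, hb⟩, hb'⟩ h
      have h' : a - m = b - m := congrArg Fin.val h
      simp only [Fin.mk_le_mk] at ha' hb'
      apply Subtype.ext
      apply Fin.ext
      simp only [Fin.mk.injEq]
      omega
    · rintro ⟨k, hk⟩
      exact ⟨⟨⟨k + m, by omega⟩, by simp⟩, by simp [Fin.ext_iff]⟩

/-- Let `Q` be an `n`-dimensional vector space over `F_p` and fix a
complete ascending flag `0 = H_0 < H_1 < ⋯ < H_n = Q`.  Then the number of complete
descending flags `Q = X_0 > X_1 > ⋯ > X_n = 0` with `X_i ⊕ H_i = Q` for all `i`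
(i.e. of complete flags opposite to the given one) equals `p^(n(n-1)/2)`. -/
theorem card_opposite_flags
    (p : ℕ) [Fact p.Prime] (Q : Type*) [AddCommGroup Q] [Module (ZMod p) Q]
    [FiniteDimensional (ZMod p) Q] (n : ℕ) (hn : Module.finrank (ZMod p) Q = n)
    (H : Fin (n + 1) → Submodule (ZMod p) Q) (hmono : Monotone H)
    (hdim : ∀ i, Module.finrank (ZMod p) (H i) = (i : ℕ)) :
    Nat.card {X : Fin (n + 1) → Submodule (ZMod p) Q //
        Antitone X ∧ (∀ i, Module.finrank (ZMod p) (X i) = n - (i : ℕ)) ∧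
        (∀ i, IsCompl (X i) (H i))} = p ^ (n * (n - 1) / 2) := by
  classical
  -- Step 1: choose an adapted "basis" vector in each step of the flag
  have hlt : ∀ j : Fin n, H j.castSucc < H j.succ := by
    intro j
    refine lt_of_le_of_ne (hmono (Fin.castSucc_le_succ j)) fun h => ?_
    have h1 := hdim j.castSucc
    rw [h, hdim] at h1
    simp [Fin.val_succ] at h1
  have he : ∀ j : Fin n, ∃ x ∈ H j.succ, x ∉ H j.castSucc := fun j =>
    SetLike.exists_of_lt (hlt j)
  choose e he1 he2 using he
  -- The predicate on families: v j = e j + (element of H j)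
  set P : (Fin n → Q) → Prop := fun v => ∀ j, v j - e j ∈ H j.castSucc with hP
  have keyindep : ∀ v : Fin n → Q, P v → LinearIndependent (ZMod p) v := by
    intro v hv
    apply aux_indep (fun j => H j.castSucc)
    · intro k j hkj
      have h1 : e k ∈ H j.castSucc :=
        hmono (show k.succ ≤ j.castSucc by
          simp only [Fin.le_def, Fin.val_succ, Fin.coe_castSucc]
          exact hkj) (he1 k)
      have h2 : v k - e k ∈ H j.castSucc :=
        hmono (show k.castSucc ≤ j.castSucc by
          simp only [Fin.le_def, Fin.coe_castSucc]
          omega) (hv k)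
      have h3 : v k = (v k - e k) + e k := by abel
      rw [h3]
      exact add_mem h2 h1
    · intro j hj
      exact he2 j (by simpa using sub_mem hj (hv j))
  have keytop : ∀ v : Fin n → Q, P v →
      Submodule.span (ZMod p) (Set.range v) = ⊤ := by
    intro v hv
    exact (keyindep v hv).span_eq_top_of_card_eq_finrank' (by simp [hn])
  -- finrank of spans of sub-families
  have hspanrank : ∀ v : Fin n → Q, P v → ∀ s : Set (Fin n),
      Module.finrank (ZMod p) (Submodule.span (ZMod p) (v '' s)) = Nat.card s := by
    intro v hv s
    rw [Set.image_eq_range]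
    exact (finrank_span_eq_card ((keyindep v hv).comp ((↑) : s → Fin n)
      Subtype.val_injective)).trans Nat.card_eq_fintype_card.symm
  -- H i is the span of the first i vectors of any adapted family
  have hHeq : ∀ (i : Fin (n + 1)) (v : Fin n → Q), P v →
      Submodule.span (ZMod p) (v '' {j | (j : ℕ) < (i : ℕ)}) = H i := by
    intro i v hv
    have hle : Submodule.span (ZMod p) (v '' {j | (j : ℕ) < (i : ℕ)}) ≤ H i := by
      rw [Submodule.span_le]
      rintro x ⟨j, hj, rfl⟩
      have h1 : e j ∈ H i :=
        hmono (show j.succ ≤ i by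
          simp only [Fin.le_def, Fin.val_succ]; exact hj) (he1 j)
      have hj' : (j : ℕ) < (i : ℕ) := hj
      have h2 : v j - e j ∈ H i :=
        hmono (show j.castSucc ≤ i by
          simp only [Fin.le_def, Fin.coe_castSucc]; omega) (hv j)
      have h3 : v j = (v j - e j) + e j := by abel
      rw [h3]
      exact add_mem h2 h1
    refine eq_of_le_of_finrank_le hle ?_
    rw [hdim, hspanrank v hv]
    exact le_of_eq (aux_cardlt n i (by omega)).symm
  -- the flag associated to an adapted family
  set F : (Fin n → Q) → Fin (n + 1) → Submodule (ZMod p) Q := fun v i =>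
    Submodule.span (ZMod p) (v '' {j | (i : ℕ) ≤ (j : ℕ)}) with hF
  have hanti : ∀ v, Antitone (F v) := by
    intro v i i' hii'
    apply Submodule.span_mono
    apply Set.image_mono
    intro j hj
    simp only [Set.mem_setOf_eq] at *
    have : (i : ℕ) ≤ (i' : ℕ) := hii'
    omega
  have hrank : ∀ v : Fin n → Q, P v → ∀ i,
      Module.finrank (ZMod p) (F v i) = n - (i : ℕ) := by
    intro v hv i
    rw [hspanrank v hv]
    exact aux_cardge n i (by omega)
  have hcompl : ∀ v : Fin n → Q, P v → ∀ i, IsCompl (F v i) (H i) := by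
    intro v hv i
    rw [← hHeq i v hv]
    constructor
    · exact (keyindep v hv).disjoint_span_image (by
        intro s hs1 hs2 j hj
        have := hs1 hj
        have := hs2 hj
        simp only [Set.mem_setOf_eq, Set.le_eq_subset] at *
        exact absurd (this) (by omega))
    · rw [codisjoint_iff, ← Submodule.span_union, ← Set.image_union]
      have : {j : Fin n | (i : ℕ) ≤ (j : ℕ)} ∪ {j | (j : ℕ) < (i : ℕ)} = Set.univ := by
        ext j; simp; omega
      rw [this, Set.image_univ, keytop v hv]
  -- The bijection
  set Φ : (∀ j : Fin n, H j.castSucc) →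
      {X : Fin (n + 1) → Submodule (ZMod p) Q //
        Antitone X ∧ (∀ i, Module.finrank (ZMod p) (X i) = n - (i : ℕ)) ∧
        (∀ i, IsCompl (X i) (H i))} := fun g =>
    ⟨F (fun j => e j + g j), hanti _, hrank _ (fun j => by simpa using (g j).2),
      hcompl _ (fun j => by simpa using (g j).2)⟩ with hΦ
  have hbij : Function.Bijective Φ := by
    constructor
    · intro g g' hgg'
      have hfg : F (fun j => e j + g j) = F (fun j => e j + g' j) :=
        congrArg Subtype.val hgg'
      funext j
      apply Subtype.ext
      have h1 : e j + (g j : Q) ∈ F (fun k => e k + g k) j.castSucc :=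
        Submodule.subset_span ⟨j, by simp, rfl⟩
      have h2 : e j + (g' j : Q) ∈ F (fun k => e k + g k) j.castSucc := by
        rw [hfg]
        exact Submodule.subset_span ⟨j, by simp, rfl⟩
      have h3 : (g j : Q) - g' j ∈ F (fun k => e k + g k) j.castSucc := by
        simpa using sub_mem h1 h2
      have h4 : (g j : Q) - g' j ∈ H j.castSucc := sub_mem (g j).2 (g' j).2
      have h5 := (hcompl (fun k => e k + (g k : Q))
        (fun k => by simpa using (g k).2) j.castSucc).disjoint
      have h6 : (g j : Q) - g' j = 0 := by
        have := Submodule.disjoint_def.mp h5 _ h3 h4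
        exact this
      exact sub_eq_zero.mp h6
    · rintro ⟨X, hXanti, hXrank, hXcompl⟩
      have hex : ∀ j : Fin n, ∃ h ∈ H j.castSucc, e j - h ∈ X j.castSucc := by
        intro j
        obtain ⟨x, h, hx, hh, hxh⟩ :=
          Submodule.codisjoint_iff_exists_add_eq.mp (hXcompl j.castSucc).codisjoint (e j)
        exact ⟨h, hh, by rw [← hxh]; simpa using hx⟩
      choose h hh hxh using hex
      refine ⟨fun j => ⟨-(h j), neg_mem (hh j)⟩, ?_⟩
      apply Subtype.ext
      funext i
      show F (fun j => e j + -(h j)) i = X i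
      have hle : F (fun j => e j + -(h j)) i ≤ X i := by
        rw [hF]
        rw [Submodule.span_le]
        rintro x ⟨j, hj, rfl⟩
        show e j + -(h j) ∈ X i
        have heq : e j + -(h j) = e j - h j := by abel
        rw [heq]
        exact hXanti (show i ≤ j.castSucc from by
          simp only [Fin.le_def, Fin.coe_castSucc]; exact hj) (hxh j)
      refine (eq_of_le_of_finrank_le hle ?_)
      rw [hXrank, hrank _ (fun j => by simpa using neg_mem (hh j))]
  -- count
  rw [← Nat.card_eq_of_bijective Φ hbij, Nat.card_pi]
  have hcard : ∀ j : Fin n, Nat.card (H j.castSucc) = p ^ (j : ℕ) := by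
    intro j
    have : Finite Q := Module.finite_of_finite (ZMod p)
    have : Fintype (H j.castSucc) := Fintype.ofFinite _
    rw [Nat.card_eq_fintype_card, card_eq_pow_finrank (K := ZMod p), ZMod.card, hdim]
    simp
  rw [Finset.prod_congr rfl (fun j _ => hcard j), Finset.prod_pow_eq_pow_sum]
  congr 1
  exact (Fin.sum_univ_eq_sum_range (fun i => i) n).trans (Finset.sum_range_id n)
end
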